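/- arXiv:2409.03908 — 8 statements merged into one kernel-verified Lean document; each statement's English description precedes it below -/
import Mathlib

section
/- Let 0 < R₁ < R₂ be real numbers and let g : ℝ → ℝ be a nonnegative, monotone nondecreasing function such that g(r) = 0 for all r ≤ R₁ and g(r) = g(R₂) for all r ≥ R₂. Define φ : ℝ² → ℝ by φ(x) = g(‖x‖). Then for every Lebesgue-measurable set Ω ⊆ ℝ² such that the Lebesgue measure of Ω ∖ closedBall(0, R₁) equals π(R₂² − R₁²), one has ∫_{A(R₁,R₂)} φ(x)² dx ≤ ∫_Ω φ(x)² dx. -/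
open MeasureTheory Real

theorem stmt_0
    (R₁ R₂ : ℝ) (hR₁ : 0 < R₁) (hR₁₂ : R₁ < R₂)
    (g : ℝ → ℝ) (hg0 : ∀ r, 0 ≤ g r) (hgmono : Monotone g)
    (hg_inner : ∀ r ≤ R₁, g r = 0)
    (hg_outer : ∀ r ≥ R₂, g r = g R₂)
    (φ : EuclideanSpace ℝ (Fin 2) → ℝ) (hφ : ∀ x, φ x = g ‖x‖)
    (Ω : Set (EuclideanSpace ℝ (Fin 2))) (hΩm : MeasurableSet Ω)
    (hΩvol : volume (Ω \ Metric.closedBall 0 R₁) = ENNReal.ofReal (π * (R₂ ^ 2 - R₁ ^ 2))) :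
    ∫ x in {x : EuclideanSpace ℝ (Fin 2) | R₁ < ‖x‖ ∧ ‖x‖ < R₂}, (φ x) ^ 2
      ≤ ∫ x in Ω, (φ x) ^ 2 := by
  set A : Set (EuclideanSpace ℝ (Fin 2)) := {x : EuclideanSpace ℝ (Fin 2) | R₁ < ‖x‖ ∧ ‖x‖ < R₂} with hA
  set Ω' : Set (EuclideanSpace ℝ (Fin 2)) := Ω \ Metric.closedBall 0 R₁ with hΩ'
  -- measurability
  have hφmeas : Measurable φ := by
    have : Measurable g := hgmono.measurable
    rw [funext hφ]; exact this.comp measurable_norm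
  have hAm : MeasurableSet A := by
    have : A = (Metric.ball (0:EuclideanSpace ℝ (Fin 2)) R₂) \ (Metric.closedBall 0 R₁) := by
      ext x
      simp [hA, Metric.mem_ball, Metric.mem_closedBall, dist_zero_right, and_comm,
        not_le]
    rw [this]
    exact measurableSet_ball.diff measurableSet_closedBall
  have hΩ'm : MeasurableSet Ω' := hΩm.diff measurableSet_closedBall
  -- boundedness
  have hbound : ∀ x : EuclideanSpace ℝ (Fin 2), φ x ^ 2 ≤ g R₂ ^ 2 := by
    intro x
    rw [hφ]
    have h1 : g ‖x‖ ≤ g R₂ := by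
      rcases le_total ‖x‖ R₂ with h | h
      · exact hgmono h
      · exact (hg_outer _ h).le
    exact pow_le_pow_left₀ (hg0 _) h1 2
  have hnonneg : ∀ x : EuclideanSpace ℝ (Fin 2), 0 ≤ φ x ^ 2 := fun x => sq_nonneg _
  -- volume of the annulus
  have hAvol : volume A = ENNReal.ofReal (π * (R₂ ^ 2 - R₁ ^ 2)) := by
    have hAeq : A = (Metric.ball (0:EuclideanSpace ℝ (Fin 2)) R₂) \ (Metric.closedBall 0 R₁) := by
      ext x
      simp [hA, Metric.mem_ball, Metric.mem_closedBall, dist_zero_right, and_comm, not_le]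
    have hball : ∀ r : ℝ, 0 ≤ r →
        volume (Metric.ball (0:EuclideanSpace ℝ (Fin 2)) r) = ENNReal.ofReal (π * r ^ 2) := by
      intro r hr
      rw [EuclideanSpace.volume_ball]
      simp only [Fintype.card_fin]
      rw [show ((2:ℕ) : ℝ) / 2 + 1 = 2 by norm_num]
      rw [Real.Gamma_two]
      rw [Real.sq_sqrt pi_pos.le]
      rw [← ENNReal.ofReal_pow hr, ← ENNReal.ofReal_mul (by positivity)]
      ring_nf
    have hcball : volume (Metric.closedBall (0:EuclideanSpace ℝ (Fin 2)) R₁) = ENNReal.ofReal (π * R₁ ^ 2) := by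
      rw [EuclideanSpace.volume_closedBall]
      simp only [Fintype.card_fin]
      rw [show ((2:ℕ) : ℝ) / 2 + 1 = 2 by norm_num]
      rw [Real.Gamma_two]
      rw [Real.sq_sqrt pi_pos.le]
      rw [← ENNReal.ofReal_pow hR₁.le, ← ENNReal.ofReal_mul (by positivity)]
      ring_nf
    rw [hAeq, measure_diff (Metric.closedBall_subset_ball hR₁₂)
      measurableSet_closedBall.nullMeasurableSet (by
        rw [hcball]; exact ENNReal.ofReal_ne_top),
      hball R₂ (hR₁.trans hR₁₂).le, hcball]
    rw [← ENNReal.ofReal_sub _ (by positivity)]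
    ring_nf
  have hpifin : ENNReal.ofReal (π * (R₂ ^ 2 - R₁ ^ 2)) ≠ ⊤ := ENNReal.ofReal_ne_top
  have hAfin : volume A ≠ ⊤ := by rw [hAvol]; exact hpifin
  have hΩ'fin : volume Ω' ≠ ⊤ := by rw [hΩvol]; exact hpifin
  -- integrability on any finite-measure set
  have hint : ∀ s : Set (EuclideanSpace ℝ (Fin 2)), volume s ≠ ⊤ → IntegrableOn (fun x => φ x ^ 2) s := by
    intro s hs
    have hconst : IntegrableOn (fun _ => g R₂ ^ 2) s :=
      integrableOn_const hs
    refine hconst.mono' ((hφmeas.pow_const 2).aestronglyMeasurable) ?_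
    filter_upwards with x
    rw [Real.norm_eq_abs, abs_of_nonneg (hnonneg x)]
    exact hbound x
  -- reduce RHS to Ω'
  have hΩsplit : ∫ x in Ω', φ x ^ 2 ≤ ∫ x in Ω, φ x ^ 2 := by
    have hzero : ∫ x in Ω ∩ Metric.closedBall 0 R₁, φ x ^ 2 = 0 := by
      apply setIntegral_eq_zero_of_forall_eq_zero
      intro x hx
      rw [hφ, hg_inner _ (by simpa [dist_zero_right] using hx.2)]
      ring
    have hunion : Ω = Ω' ∪ (Ω ∩ Metric.closedBall 0 R₁) := by
      rw [hΩ', Set.diff_union_inter]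
    have hdisj : Disjoint Ω' (Ω ∩ Metric.closedBall 0 R₁) :=
      Set.disjoint_of_subset_right Set.inter_subset_right Set.disjoint_sdiff_left
    have hfin2 : volume (Ω ∩ Metric.closedBall 0 R₁) ≠ ⊤ :=
      ne_top_of_le_ne_top (by
        simp [EuclideanSpace.volume_closedBall, ENNReal.mul_ne_top])
        (measure_mono Set.inter_subset_right)
    rw [hunion, setIntegral_union hdisj (hΩm.inter measurableSet_closedBall)
      (hint _ hΩ'fin) (hint _ hfin2), hzero, add_zero]
  refine le_trans ?_ hΩsplit
  -- main comparison: split along A ∩ Ω'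
  have hIA : IntegrableOn (fun x => φ x ^ 2) A := hint _ hAfin
  have hIΩ' : IntegrableOn (fun x => φ x ^ 2) Ω' := hint _ hΩ'fin
  have hd1 : Disjoint (A ∩ Ω') (A \ Ω') :=
    Set.disjoint_sdiff_right.mono_left Set.inter_subset_right
  have hd2 : Disjoint (A ∩ Ω') (Ω' \ A) :=
    Set.disjoint_sdiff_right.mono_left Set.inter_subset_left
  have hsplitA : ∫ x in A, φ x ^ 2 =
      (∫ x in A ∩ Ω', φ x ^ 2) + ∫ x in A \ Ω', φ x ^ 2 := by
    rw [← setIntegral_union hd1 (hAm.diff hΩ'm)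
      (hIA.mono_set Set.inter_subset_left) (hIA.mono_set Set.diff_subset),
      Set.inter_union_diff]
  have hsplitΩ : ∫ x in Ω', φ x ^ 2 =
      (∫ x in A ∩ Ω', φ x ^ 2) + ∫ x in Ω' \ A, φ x ^ 2 := by
    rw [← setIntegral_union hd2 (hΩ'm.diff hAm)
      (hIΩ'.mono_set Set.inter_subset_right) (hIΩ'.mono_set Set.diff_subset),
      Set.inter_comm, Set.inter_union_diff]
  rw [hsplitA, hsplitΩ]
  gcongr _ + ?_
  -- equal measures of the two difference sets
  have hmeq : volume (A \ Ω') = volume (Ω' \ A) := by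
    have h1 : volume (A \ Ω') + volume (A ∩ Ω') = volume A :=
      measure_diff_add_inter A hΩ'm
    have h2 : volume (Ω' \ A) + volume (Ω' ∩ A) = volume Ω' :=
      measure_diff_add_inter Ω' hAm
    rw [Set.inter_comm] at h2
    have hfin : volume (A ∩ Ω') ≠ ⊤ :=
      ne_top_of_le_ne_top hAfin (measure_mono Set.inter_subset_left)
    have : volume (A \ Ω') + volume (A ∩ Ω') = volume (Ω' \ A) + volume (A ∩ Ω') := by
      rw [h1, h2, hAvol, hΩvol]
    exact (ENNReal.add_left_inj hfin).mp this
  -- bound each side against the constant g R₂ ^ 2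
  calc ∫ x in A \ Ω', φ x ^ 2 ≤ ∫ x in A \ Ω', g R₂ ^ 2 := by
        apply setIntegral_mono_on (hIA.mono_set Set.diff_subset)
          (integrableOn_const
            (ne_top_of_le_ne_top hAfin (measure_mono Set.diff_subset)))
          (hAm.diff hΩ'm)
        exact fun x _ => hbound x
    _ = g R₂ ^ 2 * (volume (A \ Ω')).toReal := by
        rw [setIntegral_const, smul_eq_mul, mul_comm]; rfl
    _ = g R₂ ^ 2 * (volume (Ω' \ A)).toReal := by rw [hmeq]
    _ = ∫ x in Ω' \ A, g R₂ ^ 2 := by rw [setIntegral_const, smul_eq_mul, mul_comm]; rfl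
    _ = ∫ x in Ω' \ A, φ x ^ 2 := by
        apply setIntegral_congr_fun (hΩ'm.diff hAm)
        intro x hx
        have hx1 : R₁ < ‖x‖ := by
          have := hx.1.2
          simp only [Metric.mem_closedBall, dist_zero_right, not_le] at this
          exact this
        have hx2 : R₂ ≤ ‖x‖ := by
          by_contra h
          exact hx.2 ⟨hx1, lt_of_not_ge h⟩
        simp [hφ, hg_outer _ hx2]
end

section
/- Let 0 < ε < 1 and define φ : ℝ² → ℝ by φ(x) = 1 − log(‖x‖)/log(ε). Then φ is differentiable at every point x with ε < ‖x‖ < 1, the operator norm of its derivative satisfies ‖fderiv ℝ φ x‖ = 1/(‖x‖ · |log ε|) for such x, and ∫_{A(ε,1)} ‖fderiv ℝ φ x‖² dx = 2π/log(1/ε). -/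
open MeasureTheory Real

lemma aux_hasFDerivAt (ε : ℝ) (φ : EuclideanSpace ℝ (Fin 2) → ℝ)
    (hφ : ∀ x, φ x = 1 - Real.log ‖x‖ / Real.log ε)
    (x : EuclideanSpace ℝ (Fin 2)) (hx : x ≠ 0) :
    HasFDerivAt φ ((-(Real.log ε * ‖x‖ ^ 2)⁻¹) •
      (innerSL ℝ x : EuclideanSpace ℝ (Fin 2) →L[ℝ] ℝ)) x := by
  have hx2 : (0:ℝ) < ‖x‖ ^ 2 := pow_pos (norm_pos_iff.mpr hx) 2
  have h1 : HasFDerivAt (fun y : EuclideanSpace ℝ (Fin 2) => Real.log (‖y‖ ^ 2))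
      ((‖x‖ ^ 2)⁻¹ • (2 • (innerSL ℝ x : EuclideanSpace ℝ (Fin 2) →L[ℝ] ℝ))) x :=
    by have := (Real.hasDerivAt_log hx2.ne').comp_hasFDerivAt x (hasStrictFDerivAt_norm_sq x).hasFDerivAt; exact this
  have h2 : HasFDerivAt φ ((-(2 * Real.log ε)⁻¹) •
      ((‖x‖ ^ 2)⁻¹ • (2 • (innerSL ℝ x : EuclideanSpace ℝ (Fin 2) →L[ℝ] ℝ)))) x := by
    have hφ' : φ = fun y => 1 - (2 * Real.log ε)⁻¹ * Real.log (‖y‖ ^ 2) := by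
      funext y
      rw [hφ y, Real.log_pow]
      push_cast
      by_cases hL : Real.log ε = 0
      · simp [hL]
      · field_simp
    rw [hφ']
    simpa [neg_smul] using ((h1.const_mul ((2 * Real.log ε)⁻¹)).const_sub 1)
  convert h2 using 1
  · rfl
  ext y
  simp only [two_nsmul, ContinuousLinearMap.smul_apply, ContinuousLinearMap.add_apply,
    smul_eq_mul]
  by_cases hL : Real.log ε = 0
  · simp [hL]
  · field_simp
    ring

theorem stmt_1
    (ε : ℝ) (hε0 : 0 < ε) (hε1 : ε < 1)
    (φ : EuclideanSpace ℝ (Fin 2) → ℝ)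
    (hφ : ∀ x, φ x = 1 - Real.log ‖x‖ / Real.log ε) :
    (∀ x : EuclideanSpace ℝ (Fin 2), ε < ‖x‖ → ‖x‖ < 1 →
        DifferentiableAt ℝ φ x ∧ ‖fderiv ℝ φ x‖ = 1 / (‖x‖ * |Real.log ε|)) ∧
    ∫ x in {x : EuclideanSpace ℝ (Fin 2) | ε < ‖x‖ ∧ ‖x‖ < 1}, ‖fderiv ℝ φ x‖ ^ 2
      = 2 * π / Real.log (1 / ε) := by
  have hL : Real.log ε < 0 := Real.log_neg hε0 hε1
  have hL0 : Real.log ε ≠ 0 := hL.ne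
  have key : ∀ x : EuclideanSpace ℝ (Fin 2), ε < ‖x‖ → ‖x‖ < 1 →
      DifferentiableAt ℝ φ x ∧ ‖fderiv ℝ φ x‖ = 1 / (‖x‖ * |Real.log ε|) := by
    intro x hx1 hx2
    have hx0 : (0:ℝ) < ‖x‖ := hε0.trans hx1
    have hD := aux_hasFDerivAt ε φ hφ x (norm_pos_iff.mp hx0)
    refine ⟨hD.differentiableAt, ?_⟩
    rw [hD.fderiv, norm_smul, innerSL_apply_norm]
    rw [norm_neg, Real.norm_eq_abs, abs_inv, abs_mul, abs_of_pos (by positivity : (0:ℝ) < ‖x‖ ^ 2)]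
    field_simp
  refine ⟨key, ?_⟩
  have hSmeas : MeasurableSet {x : EuclideanSpace ℝ (Fin 2) | ε < ‖x‖ ∧ ‖x‖ < 1} := by
    apply MeasurableSet.inter
    · exact measurableSet_lt measurable_const measurable_norm
    · exact measurableSet_lt measurable_norm measurable_const
  have step1 : ∫ x in {x : EuclideanSpace ℝ (Fin 2) | ε < ‖x‖ ∧ ‖x‖ < 1}, ‖fderiv ℝ φ x‖ ^ 2
      = ∫ x : EuclideanSpace ℝ (Fin 2),
          Set.indicator (Set.Ioo ε 1) (fun r => (1 / (r * |Real.log ε|)) ^ 2) ‖x‖ := by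
    rw [← integral_indicator hSmeas]
    congr 1
    funext x
    simp only [Set.indicator_apply, Set.mem_setOf_eq, Set.mem_Ioo]
    by_cases hx : ε < ‖x‖ ∧ ‖x‖ < 1
    · simp only [if_pos hx, (key x hx.1 hx.2).2]
    · simp only [if_neg hx]
  rw [step1, integral_fun_norm_addHaar volume
    (Set.indicator (Set.Ioo ε 1) (fun r => (1 / (r * |Real.log ε|)) ^ 2))]
  have hdim : Module.finrank ℝ (EuclideanSpace ℝ (Fin 2)) = 2 := finrank_euclideanSpace_fin
  rw [hdim]
  have hvol : (volume (Metric.ball (0 : EuclideanSpace ℝ (Fin 2)) 1)).toReal = π := by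
    rw [EuclideanSpace.volume_ball]
    have hG : Real.Gamma ((Fintype.card (Fin 2) : ℝ) / 2 + 1) = 1 := by
      norm_num
    rw [hG]
    simp [Real.sq_sqrt Real.pi_nonneg, ENNReal.toReal_ofReal Real.pi_nonneg]
  rw [measureReal_def, hvol]
  have hinner : (∫ y in Set.Ioi (0:ℝ),
      y ^ (2 - 1) • Set.indicator (Set.Ioo ε 1) (fun r => (1 / (r * |Real.log ε|)) ^ 2) y)
      = (Real.log (1/ε))⁻¹ := by
    have h1 : ∀ y : ℝ, y ^ (2-1) •
        Set.indicator (Set.Ioo ε 1) (fun r => (1 / (r * |Real.log ε|)) ^ 2) y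
        = Set.indicator (Set.Ioo ε 1) (fun r => r * (1 / (r * |Real.log ε|)) ^ 2) y := by
      intro y
      by_cases hy : y ∈ Set.Ioo ε 1
      · simp [Set.indicator_of_mem hy, smul_eq_mul]
      · simp [Set.indicator_of_notMem hy]
    simp_rw [h1]
    rw [integral_indicator measurableSet_Ioo, Measure.restrict_restrict measurableSet_Ioo]
    have hss : Set.Ioo ε 1 ∩ Set.Ioi 0 = Set.Ioo ε 1 := by
      apply Set.inter_eq_left.mpr
      intro y hy; exact hε0.trans hy.1
    rw [hss]
    have hcong : ∀ y ∈ Set.Ioo ε 1, y * (1 / (y * |Real.log ε|)) ^ 2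
        = (Real.log ε)⁻¹ ^ 2 * (1 / y) := by
      intro y hy
      have hy0 : (0:ℝ) < y := hε0.trans hy.1
      rw [abs_of_neg hL]
      field_simp
    rw [setIntegral_congr_fun measurableSet_Ioo hcong, integral_const_mul,
      ← integral_Ioc_eq_integral_Ioo,
      ← intervalIntegral.integral_of_le hε1.le]
    rw [integral_one_div (by
      intro h
      rw [Set.mem_uIcc] at h
      rcases h with ⟨h1, _⟩ | ⟨_, h2⟩
      · exact absurd h1 (not_le.mpr hε0)
      · linarith)]
    have hlog : Real.log (1/ε) = -Real.log ε := by
      rw [one_div, Real.log_inv]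
    rw [hlog, sq]
    field_simp
  rw [hinner]
  simp only [nsmul_eq_mul, smul_eq_mul, Nat.cast_ofNat]
  rw [div_eq_mul_inv]
  ring
end

section
/- For every real ε with 0 < ε < e⁻², one has ∫_{A(ε,1)} (1 − log(‖x‖)/log(ε))² dx ≥ π/2, where the integral is with respect to Lebesgue measure on ℝ². -/
open MeasureTheory Real

theorem stmt_3 (ε : ℝ) (hε0 : 0 < ε) (hε : ε < Real.exp (-2)) :
    π / 2 ≤ ∫ x in {x : EuclideanSpace ℝ (Fin 2) | ε < ‖x‖ ∧ ‖x‖ < 1},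
      (1 - Real.log ‖x‖ / Real.log ε) ^ 2 := by
  set L := Real.log ε with hLdef
  have hL : L < -2 := by
    have := Real.log_lt_log hε0 hε
    rwa [Real.log_exp] at this
  have hLne : L ≠ 0 := by nlinarith
  have hε1 : ε < 1 := lt_trans hε (by
    have := Real.exp_lt_one_iff.mpr (by norm_num : (-2:ℝ) < 0); linarith)
  -- the 1D profile, with indicator
  set f : ℝ → ℝ := fun r => (1 - Real.log r / L) ^ 2 with hf
  set g : ℝ → ℝ := Set.indicator (Set.Ioo ε 1) f with hg
  -- Step 1: set integral = full-space integral of g ∘ norm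
  have hset : {x : EuclideanSpace ℝ (Fin 2) | ε < ‖x‖ ∧ ‖x‖ < 1}
      = (fun x : EuclideanSpace ℝ (Fin 2) => ‖x‖) ⁻¹' (Set.Ioo ε 1) := rfl
  have hmeas : MeasurableSet {x : EuclideanSpace ℝ (Fin 2) | ε < ‖x‖ ∧ ‖x‖ < 1} := by
    rw [hset]; exact measurableSet_Ioo.preimage (continuous_norm.measurable)
  have step1 : (∫ x in {x : EuclideanSpace ℝ (Fin 2) | ε < ‖x‖ ∧ ‖x‖ < 1},
      (1 - Real.log ‖x‖ / L) ^ 2) = ∫ x : EuclideanSpace ℝ (Fin 2), g ‖x‖ := by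
    rw [← integral_indicator hmeas]
    refine integral_congr_ae (Filter.Eventually.of_forall fun x => ?_)
    simp only [hg, Set.indicator_apply, hset, Set.mem_preimage, hf]
    by_cases h : ‖x‖ ∈ Set.Ioo ε 1 <;> simp [h]
  rw [step1]
  -- Step 2: reduce to a radial integral
  rw [MeasureTheory.integral_fun_norm_addHaar (volume : Measure (EuclideanSpace ℝ (Fin 2))) g]
  have hrank : Module.finrank ℝ (EuclideanSpace ℝ (Fin 2)) = 2 := by simp
  rw [hrank]
  have hball : (volume (Metric.ball (0:EuclideanSpace ℝ (Fin 2)) 1)).toReal = π := by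
    rw [EuclideanSpace.volume_ball]
    norm_num [Real.Gamma_two, Real.sq_sqrt Real.pi_pos.le, ENNReal.toReal_ofReal Real.pi_pos.le]
  rw [measureReal_def, hball]
  -- Step 3: compute the radial integral
  have hind : ∀ y : ℝ, y ^ (2 - 1) • g y = Set.indicator (Set.Ioo ε 1) (fun y => y * f y) y := by
    intro y
    simp only [pow_one, smul_eq_mul, hg, Set.indicator_apply]
    by_cases h : y ∈ Set.Ioo ε 1 <;> simp [h]
  have step3 : (∫ y in Set.Ioi (0:ℝ), y ^ (2 - 1) • g y)
      = ∫ y in Set.Ioo ε 1, y * f y := by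
    simp_rw [hind]
    rw [integral_indicator measurableSet_Ioo, Measure.restrict_restrict measurableSet_Ioo]
    rw [Set.Ioo_inter_Ioi, max_eq_left hε0.le]
  rw [step3]
  -- Step 4: FTC with explicit antiderivative
  set F : ℝ → ℝ := fun r => r ^ 2 *
    ((1 - Real.log r / L) ^ 2 / 2 + (1 - Real.log r / L) / (2 * L) + 1 / (4 * L ^ 2)) with hF
  have hderiv : ∀ r ∈ Set.uIcc ε 1, HasDerivAt F (r * f r) r := by
    intro r hr
    rw [Set.uIcc_of_le hε1.le] at hr
    have hr0 : 0 < r := lt_of_lt_of_le hε0 hr.1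
    have hlog : HasDerivAt Real.log r⁻¹ r := Real.hasDerivAt_log hr0.ne'
    have hu : HasDerivAt (fun r => 1 - Real.log r / L) (-(r⁻¹ / L)) r :=
      ((hlog.div_const L).const_sub 1)
    have h1 : HasDerivAt (fun r => (1 - Real.log r / L) ^ 2 / 2 +
        (1 - Real.log r / L) / (2 * L) + 1 / (4 * L ^ 2))
        ((2 * (1 - Real.log r / L) * (-(r⁻¹ / L))) / 2 + (-(r⁻¹ / L)) / (2 * L)) r := by
      exact (((hu.pow 2).div_const 2).add (hu.div_const (2 * L))).add_const _ |>.congr_deriv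
        (by ring)
    have h2 := (hasDerivAt_pow 2 r).fun_mul h1
    refine h2.congr_deriv ?_
    have : r⁻¹ * r = 1 := inv_mul_cancel₀ hr0.ne'
    simp only [hf]
    field_simp [hf]
    ring
  have hcont : ContinuousOn (fun r => r * f r) (Set.uIcc ε 1) := by
    rw [Set.uIcc_of_le hε1.le]
    apply ContinuousOn.mul continuousOn_id
    apply ContinuousOn.pow
    apply ContinuousOn.sub continuousOn_const
    apply ContinuousOn.div_const
    apply ContinuousOn.log continuousOn_id
    intro x hx; exact (lt_of_lt_of_le hε0 hx.1).ne'
  have hftc : (∫ y in ε..1, y * f y) = F 1 - F ε :=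
    intervalIntegral.integral_eq_sub_of_hasDerivAt hderiv
      (hcont.intervalIntegrable)
  have hIoo : (∫ y in Set.Ioo ε 1, y * f y) = ∫ y in ε..1, y * f y := by
    rw [intervalIntegral.integral_of_le hε1.le, integral_Ioc_eq_integral_Ioo]
  rw [hIoo, hftc]
  -- Step 5: arithmetic
  have hF1 : F 1 = 1 / 2 + 1 / (2 * L) + 1 / (4 * L ^ 2) := by
    simp [hF, Real.log_one]
  have hFε : F ε = ε ^ 2 * (1 / (4 * L ^ 2)) := by
    have : 1 - L / L = 0 := by rw [div_self hLne, sub_self]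
    simp [hF, ← hLdef, this]
  rw [hF1, hFε]
  have hπ := Real.pi_pos
  have hL2 : (0:ℝ) < L ^ 2 := by positivity
  have hεsq : ε ^ 2 < 1 := by nlinarith
  have key : (1:ℝ) / 4 ≤ 1 / 2 + 1 / (2 * L) + 1 / (4 * L ^ 2) - ε ^ 2 * (1 / (4 * L ^ 2)) := by
    have h1 : -(1/4 : ℝ) ≤ 1 / (2 * L) := by
      have ha : 1 / (-(2*L)) ≤ 1 / 4 :=
        one_div_le_one_div_of_le (by norm_num) (by linarith)
      have he : 1 / (2 * L) = -(1 / (-(2 * L))) := by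
        rw [div_neg, neg_neg]
      linarith
    have h2 : 0 ≤ 1 / (4 * L ^ 2) - ε ^ 2 * (1 / (4 * L ^ 2)) := by
      have hq : (0:ℝ) ≤ 1 / (4 * L ^ 2) := by positivity
      nlinarith
    linarith
  calc π / 2 = 2 * (π * (1/4)) := by ring
    _ ≤ 2 * (π * (1 / 2 + 1 / (2 * L) + 1 / (4 * L ^ 2) - ε ^ 2 * (1 / (4 * L ^ 2)))) := by
        have := mul_le_mul_of_nonneg_left key hπ.le
        linarith
    _ = 2 • π • (1 / 2 + 1 / (2 * L) + 1 / (4 * L ^ 2) - ε ^ 2 * (1 / (4 * L ^ 2))) := by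
        simp [smul_eq_mul]
end

section
/- Let 0 < ε < e⁻² and define φ : ℝ² → ℝ by φ(x) = 1 − log(‖x‖)/log(ε). Then ∫_{A(ε,1)} ‖fderiv ℝ φ x‖² dx ≤ (4/log(1/ε)) · ∫_{A(ε,1)} φ(x)² dx. -/
open MeasureTheory Real

-- reduction of annulus integrals of radial functions to 1D integrals
lemma annulus_radial (a b : ℝ) (ha : 0 ≤ a) (g : ℝ → ℝ) :
    ∫ x in {x : EuclideanSpace ℝ (Fin 2) | a < ‖x‖ ∧ ‖x‖ < b}, g ‖x‖ =
      2 * (volume (Metric.ball (0 : EuclideanSpace ℝ (Fin 2)) 1)).toReal *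
        ∫ y in Set.Ioo a b, y * g y := by
  have hset : {x : EuclideanSpace ℝ (Fin 2) | a < ‖x‖ ∧ ‖x‖ < b}
      = (fun x : EuclideanSpace ℝ (Fin 2) => ‖x‖) ⁻¹' Set.Ioo a b := rfl
  have hms : MeasurableSet ((fun x : EuclideanSpace ℝ (Fin 2) => ‖x‖) ⁻¹' Set.Ioo a b) :=
    measurable_norm measurableSet_Ioo
  rw [hset, ← integral_indicator hms]
  have hind : (fun x : EuclideanSpace ℝ (Fin 2) =>
      Set.indicator ((fun x : EuclideanSpace ℝ (Fin 2) => ‖x‖) ⁻¹' Set.Ioo a b)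
        (fun x => g ‖x‖) x)
      = fun x : EuclideanSpace ℝ (Fin 2) => (Set.indicator (Set.Ioo a b) g) ‖x‖ := by
    funext x
    exact Set.indicator_comp_right (g := g) (s := Set.Ioo a b)
      (fun x : EuclideanSpace ℝ (Fin 2) => ‖x‖)
  rw [hind, MeasureTheory.integral_fun_norm_addHaar volume (Set.indicator (Set.Ioo a b) g)]
  rw [finrank_euclideanSpace_fin]
  have h1 : ∀ y : ℝ, y ^ (2 - 1) • (Set.indicator (Set.Ioo a b) g) y
      = Set.indicator (Set.Ioo a b) (fun y => y * g y) y := by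
    intro y
    simp only [pow_one, smul_eq_mul, Set.indicator_apply]
    split_ifs <;> simp
  rw [MeasureTheory.setIntegral_congr_fun measurableSet_Ioi (fun y _ => h1 y)]
  rw [MeasureTheory.setIntegral_indicator measurableSet_Ioo]
  have h2 : Set.Ioi (0:ℝ) ∩ Set.Ioo a b = Set.Ioo a b := by
    apply Set.inter_eq_self_of_subset_right
    intro y hy
    exact lt_of_le_of_lt ha hy.1
  rw [h2, nsmul_eq_mul, smul_eq_mul]
  rw [measureReal_def]; ring

-- 1D integral for the gradient term
lemma oneD_grad (ε L : ℝ) (hε0 : 0 < ε) (hε1 : ε < 1) (hL : 0 < L)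
    (hlog : Real.log ε = -L) :
    ∫ y in Set.Ioo ε 1, y * ((L * y)⁻¹) ^ 2 = L⁻¹ := by
  have hcongr : ∀ y ∈ Set.Ioo ε 1, y * ((L * y)⁻¹) ^ 2 = (L ^ 2)⁻¹ * y⁻¹ := by
    intro y hy
    have hy0 : y ≠ 0 := ne_of_gt (lt_trans hε0 hy.1)
    field_simp
  rw [MeasureTheory.setIntegral_congr_fun measurableSet_Ioo hcongr]
  rw [MeasureTheory.integral_const_mul]
  rw [← MeasureTheory.integral_Ioc_eq_integral_Ioo,
    ← intervalIntegral.integral_of_le hε1.le]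
  rw [integral_inv_of_pos hε0 one_pos]
  rw [Real.log_div one_ne_zero (ne_of_gt hε0), Real.log_one, hlog]
  have hL0 : L ≠ 0 := ne_of_gt hL
  field_simp
  ring

-- 1D lower bound for the potential term
lemma oneD_pot (ε L : ℝ) (hε0 : 0 < ε) (hε1 : ε < 1) (hL : 2 ≤ L)
    (hlog : Real.log ε = -L) :
    (1 : ℝ) / 4 ≤ ∫ y in Set.Ioo ε 1, y * (1 + Real.log y / L) ^ 2 := by
  have hLpos : (0:ℝ) < L := lt_of_lt_of_le two_pos hL
  have hcont1 : ContinuousOn (fun y : ℝ => y * (1 + Real.log y / L) ^ 2) (Set.Icc ε 1) := by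
    apply ContinuousOn.mul continuousOn_id
    apply ContinuousOn.pow
    apply ContinuousOn.add continuousOn_const
    apply ContinuousOn.div_const
    apply ContinuousOn.mono Real.continuousOn_log
    intro y hy
    exact ne_of_gt (lt_of_lt_of_le hε0 hy.1)
  have hcont2 : ContinuousOn (fun y : ℝ => y + (2 / L) * (y * Real.log y)) (Set.Icc ε 1) := by
    apply ContinuousOn.add continuousOn_id
    apply ContinuousOn.mul continuousOn_const
    apply ContinuousOn.mul continuousOn_id
    apply ContinuousOn.mono Real.continuousOn_log
    intro y hy
    exact ne_of_gt (lt_of_lt_of_le hε0 hy.1)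
  have hint1 : IntegrableOn (fun y : ℝ => y * (1 + Real.log y / L) ^ 2) (Set.Ioo ε 1) :=
    (hcont1.integrableOn_Icc).mono_set Set.Ioo_subset_Icc_self
  have hint2 : IntegrableOn (fun y : ℝ => y + (2 / L) * (y * Real.log y)) (Set.Ioo ε 1) :=
    (hcont2.integrableOn_Icc).mono_set Set.Ioo_subset_Icc_self
  have hmono : ∫ y in Set.Ioo ε 1, (y + (2 / L) * (y * Real.log y))
      ≤ ∫ y in Set.Ioo ε 1, y * (1 + Real.log y / L) ^ 2 := by
    apply MeasureTheory.setIntegral_mono_on hint2 hint1 measurableSet_Ioo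
    intro y hy
    have hy0 : 0 < y := lt_trans hε0 hy.1
    have hsq : 0 ≤ (Real.log y / L) ^ 2 := sq_nonneg _
    have hkey : y * (1 + Real.log y / L) ^ 2
        = y + (2 / L) * (y * Real.log y) + y * (Real.log y / L) ^ 2 := by
      field_simp
      ring
    rw [hkey]
    nlinarith [mul_nonneg hy0.le hsq]
  have hval : ∫ y in Set.Ioo ε 1, (y + (2 / L) * (y * Real.log y))
      = (1/2 + (2/L) * (0 - 1/4)) - (ε^2/2 + (2/L) * (ε^2/2 * Real.log ε - ε^2/4)) := by
    rw [← MeasureTheory.integral_Ioc_eq_integral_Ioo,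
      ← intervalIntegral.integral_of_le hε1.le]
    have hderiv : ∀ y ∈ Set.uIcc ε 1, HasDerivAt
        (fun y : ℝ => y^2/2 + (2/L) * (y^2/2 * Real.log y - y^2/4))
        (y + (2 / L) * (y * Real.log y)) y := by
      intro y hy
      rw [Set.uIcc_of_le hε1.le] at hy
      have hy0 : y ≠ 0 := ne_of_gt (lt_of_lt_of_le hε0 hy.1)
      have h1 : HasDerivAt (fun y : ℝ => y^2/2) y y := by
        simpa using ((hasDerivAt_pow 2 y).div_const 2)
      have h2 : HasDerivAt (fun y : ℝ => y^2/2 * Real.log y)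
          (y * Real.log y + (y^2/2) * y⁻¹) y :=
        h1.mul (Real.hasDerivAt_log hy0)
      have h3 : HasDerivAt (fun y : ℝ => y^2/2 * Real.log y - y^2/4)
          ((y * Real.log y + (y^2/2) * y⁻¹) - 2*y/4) y := by
        apply h2.sub
        simpa using ((hasDerivAt_pow 2 y).div_const 4)
      have h4 := h1.add (h3.const_mul (2/L))
      refine h4.congr_deriv ?_
      field_simp
      ring
    rw [intervalIntegral.integral_eq_sub_of_hasDerivAt hderiv
      ((hcont2.mono (by rw [Set.uIcc_of_le hε1.le])).intervalIntegrable)]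
    norm_num
  rw [hval] at hmono
  refine le_trans ?_ hmono
  rw [hlog]
  have hL0 : L ≠ 0 := ne_of_gt hLpos
  have hrw : 1/2 + 2/L*(0 - 1/4) - (ε^2/2 + 2/L*(ε^2/2*(-L) - ε^2/4))
      = 1/2 - (2/L)/4 + ε^2/2 + (2/L)*(ε^2/4) := by
    field_simp
    ring
  rw [hrw]
  have ht1 : 2/L ≤ 1 := by
    rw [div_le_one hLpos]; linarith
  have ht0 : (0:ℝ) ≤ 2/L := by positivity
  nlinarith [sq_nonneg ε, mul_nonneg ht0 (sq_nonneg ε)]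

lemma fderiv_norm_log (ε L : ℝ) (hL : 0 < L) (hlog : Real.log ε = -L)
    (φ : EuclideanSpace ℝ (Fin 2) → ℝ)
    (hφ : ∀ x, φ x = 1 - Real.log ‖x‖ / Real.log ε)
    (x : EuclideanSpace ℝ (Fin 2)) (hx : x ≠ 0) :
    ‖fderiv ℝ φ x‖ = (L * ‖x‖)⁻¹ := by
  have hx0 : ‖x‖ ≠ 0 := norm_ne_zero_iff.mpr hx
  have hxpos : (0:ℝ) < ‖x‖ := norm_pos_iff.mpr hx
  have hlogε : Real.log ε ≠ 0 := by rw [hlog]; exact neg_ne_zero.mpr (ne_of_gt hL)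
  have hφ' : φ = fun y : EuclideanSpace ℝ (Fin 2) =>
      1 - (Real.log ε * 2)⁻¹ * Real.log (‖y‖ ^ 2) := by
    funext y
    rw [hφ, Real.log_pow]
    push_cast
    field_simp
  have h1 : HasFDerivAt (fun y : EuclideanSpace ℝ (Fin 2) => ‖y‖ ^ 2)
      (2 • (innerSL ℝ x)) x := (hasStrictFDerivAt_norm_sq x).hasFDerivAt
  have h2 : HasDerivAt Real.log (‖x‖ ^ 2)⁻¹ (‖x‖ ^ 2) :=
    Real.hasDerivAt_log (pow_ne_zero 2 hx0)
  have h3 := h2.comp_hasFDerivAt x h1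
  simp only [Function.comp_def] at h3
  have h4 := h3.const_mul ((Real.log ε * 2)⁻¹)
  have h5 := h4.const_sub 1
  rw [hφ', h5.fderiv]
  rw [norm_neg, norm_smul, norm_smul, ← Nat.cast_smul_eq_nsmul ℝ, norm_smul]
  rw [innerSL_apply_norm]
  simp only [norm_inv, Real.norm_eq_abs, Nat.cast_ofNat, Nat.abs_ofNat]
  rw [abs_mul, abs_of_pos (pow_pos hxpos 2), hlog, abs_neg, abs_of_pos hL]
  have : |(-L : ℝ)| = L := by rw [abs_neg, abs_of_pos hL]
  field_simp
  ring

theorem stmt_4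
    (ε : ℝ) (hε0 : 0 < ε) (hε : ε < Real.exp (-2))
    (φ : EuclideanSpace ℝ (Fin 2) → ℝ)
    (hφ : ∀ x, φ x = 1 - Real.log ‖x‖ / Real.log ε) :
    ∫ x in {x : EuclideanSpace ℝ (Fin 2) | ε < ‖x‖ ∧ ‖x‖ < 1}, ‖fderiv ℝ φ x‖ ^ 2
      ≤ (4 / Real.log (1 / ε)) *
        ∫ x in {x : EuclideanSpace ℝ (Fin 2) | ε < ‖x‖ ∧ ‖x‖ < 1}, (φ x) ^ 2 := by
  have hlogε : Real.log ε < -2 := by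
    have := Real.log_lt_log hε0 hε
    rwa [Real.log_exp] at this
  set L : ℝ := -Real.log ε with hLdef
  have hlog : Real.log ε = -L := by rw [hLdef]; ring
  have hL2 : 2 < L := by rw [hLdef]; linarith
  have hLpos : 0 < L := by linarith
  have hε1 : ε < 1 := lt_trans hε (by
    rw [Real.exp_lt_one_iff]; norm_num)
  have hlog1 : Real.log (1 / ε) = L := by
    rw [one_div, Real.log_inv, hlog]; ring
  have hms : MeasurableSet {x : EuclideanSpace ℝ (Fin 2) | ε < ‖x‖ ∧ ‖x‖ < 1} :=
    show MeasurableSet ((fun x : EuclideanSpace ℝ (Fin 2) => ‖x‖) ⁻¹' Set.Ioo ε 1) from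
      measurable_norm measurableSet_Ioo
  have hLHS : ∫ x in {x : EuclideanSpace ℝ (Fin 2) | ε < ‖x‖ ∧ ‖x‖ < 1}, ‖fderiv ℝ φ x‖ ^ 2
      = ∫ x in {x : EuclideanSpace ℝ (Fin 2) | ε < ‖x‖ ∧ ‖x‖ < 1},
          (fun r : ℝ => ((L * r)⁻¹) ^ 2) ‖x‖ := by
    apply MeasureTheory.setIntegral_congr_fun hms
    intro x hx
    have hxne : x ≠ 0 := by
      intro h
      rw [h] at hx
      simp at hx
      linarith
    simp only
    rw [fderiv_norm_log ε L hLpos hlog φ hφ x hxne]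
  have hRHS : ∫ x in {x : EuclideanSpace ℝ (Fin 2) | ε < ‖x‖ ∧ ‖x‖ < 1}, (φ x) ^ 2
      = ∫ x in {x : EuclideanSpace ℝ (Fin 2) | ε < ‖x‖ ∧ ‖x‖ < 1},
          (fun r : ℝ => (1 + Real.log r / L) ^ 2) ‖x‖ := by
    apply MeasureTheory.setIntegral_congr_fun hms
    intro x _
    simp only
    rw [hφ, hlog, div_neg, sub_neg_eq_add]
  rw [hLHS, hRHS, annulus_radial ε 1 hε0.le (fun r : ℝ => ((L * r)⁻¹) ^ 2),
    annulus_radial ε 1 hε0.le (fun r : ℝ => (1 + Real.log r / L) ^ 2)]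
  rw [oneD_grad ε L hε0 hε1 hLpos hlog, hlog1]
  have hJ := oneD_pot ε L hε0 hε1 hL2.le hlog
  set B := (volume (Metric.ball (0 : EuclideanSpace ℝ (Fin 2)) 1)).toReal with hBdef
  have hB : 0 ≤ B := ENNReal.toReal_nonneg
  set J := ∫ y in Set.Ioo ε 1, y * (1 + Real.log y / L) ^ 2 with hJdef
  have hstart : 2 * B * L⁻¹ = 4 / L * (2 * B * (1/4)) := by
    field_simp
  rw [hstart]
  gcongr
end

section
/- Let 0 < R₁ ≤ e⁻²·R₂ and define φ : ℝ² → ℝ by φ(x) = log(‖x‖/R₁)/log(R₂/R₁). Then ∫_{A(R₁,R₂)} ‖fderiv ℝ φ x‖² dx ≤ (4/(R₂² · log(R₂/R₁))) · ∫_{A(R₁,R₂)} φ(x)² dx. -/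
open MeasureTheory Real


lemma grad_norm (R₁ L : ℝ) (hR₁ : 0 < R₁) (hL : 0 < L)
    (φ : EuclideanSpace ℝ (Fin 2) → ℝ)
    (hφ : ∀ x, φ x = Real.log (‖x‖ / R₁) / L)
    (x : EuclideanSpace ℝ (Fin 2)) (hx : x ≠ 0) :
    ‖fderiv ℝ φ x‖ = (L * ‖x‖)⁻¹ := by
  have hnx : ‖x‖ ≠ 0 := norm_ne_zero_iff.2 hx
  have hd : DifferentiableAt ℝ (‖·‖) x :=
    ((contDiffAt_norm ℝ (n := 1) hx).differentiableAt one_ne_zero)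
  have h1 : HasFDerivAt (fun y : EuclideanSpace ℝ (Fin 2) => Real.log ‖y‖)
      (‖x‖⁻¹ • fderiv ℝ (‖·‖) x) x :=
    (Real.hasDerivAt_log hnx).comp_hasFDerivAt x hd.hasFDerivAt
  have h2 : HasFDerivAt (fun y : EuclideanSpace ℝ (Fin 2) => (Real.log ‖y‖ - Real.log R₁) / L)
      ((L⁻¹ * ‖x‖⁻¹) • fderiv ℝ (‖·‖) x) x := by
    have := ((h1.sub_const (Real.log R₁)).const_smul (R := ℝ) L⁻¹)
    simpa [div_eq_inv_mul, smul_smul, Pi.smul_def] using this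
  have heq : φ =ᶠ[nhds x] fun y => (Real.log ‖y‖ - Real.log R₁) / L := by
    filter_upwards [IsOpen.mem_nhds isOpen_compl_singleton hx] with y hy
    rw [hφ, Real.log_div (norm_ne_zero_iff.2 hy) hR₁.ne']
  have h3 : HasFDerivAt φ ((L⁻¹ * ‖x‖⁻¹) • fderiv ℝ (‖·‖) x) x :=
    h2.congr_of_eventuallyEq heq
  rw [h3.fderiv, norm_smul, norm_fderiv_norm hd]
  rw [mul_inv]
  simp [abs_of_pos hL, abs_of_nonneg (norm_nonneg x), mul_comm]

lemma radial_int (R₁ R₂ : ℝ) (hR₁ : 0 < R₁) (g : ℝ → ℝ) :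
    ∫ x in {x : EuclideanSpace ℝ (Fin 2) | R₁ < ‖x‖ ∧ ‖x‖ < R₂}, g ‖x‖
      = (2 * π) * ∫ y in Set.Ioo R₁ R₂, y * g y := by
  have hA : {x : EuclideanSpace ℝ (Fin 2) | R₁ < ‖x‖ ∧ ‖x‖ < R₂}
      = (fun x : EuclideanSpace ℝ (Fin 2) => ‖x‖) ⁻¹' Set.Ioo R₁ R₂ := rfl
  have hmeas : MeasurableSet ((fun x : EuclideanSpace ℝ (Fin 2) => ‖x‖) ⁻¹' Set.Ioo R₁ R₂) :=
    measurableSet_Ioo.preimage (continuous_norm.measurable)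
  rw [hA, ← integral_indicator hmeas]
  have hind : ∀ x : EuclideanSpace ℝ (Fin 2),
      Set.indicator ((fun x : EuclideanSpace ℝ (Fin 2) => ‖x‖) ⁻¹' Set.Ioo R₁ R₂)
        (fun x => g ‖x‖) x = Set.indicator (Set.Ioo R₁ R₂) g ‖x‖ := by
    intro x
    by_cases h : ‖x‖ ∈ Set.Ioo R₁ R₂ <;> simp [Set.indicator_apply, h]
  simp_rw [hind]
  rw [integral_fun_norm_addHaar (volume : Measure (EuclideanSpace ℝ (Fin 2)))
      (Set.indicator (Set.Ioo R₁ R₂) g)]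
  have hdim : Module.finrank ℝ (EuclideanSpace ℝ (Fin 2)) = 2 := finrank_euclideanSpace_fin
  rw [hdim]
  have hvol : (volume (Metric.ball (0 : EuclideanSpace ℝ (Fin 2)) 1)).toReal = π := by
    rw [EuclideanSpace.volume_ball]
    have h2 : ((2:ℕ):ℝ) / 2 + 1 = 2 := by norm_num
    simp only [Fintype.card_fin]
    rw [ENNReal.ofReal_one, one_pow, one_mul, h2, Real.Gamma_two, div_one,
      Real.sq_sqrt pi_pos.le, ENNReal.toReal_ofReal pi_pos.le]
  rw [measureReal_def, hvol]
  have : ∫ y in Set.Ioi (0:ℝ), y ^ (2 - 1) • Set.indicator (Set.Ioo R₁ R₂) g y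
      = ∫ y in Set.Ioo R₁ R₂, y * g y := by
    have h1 : ∀ y : ℝ, y ^ (2-1) • Set.indicator (Set.Ioo R₁ R₂) g y
        = Set.indicator (Set.Ioo R₁ R₂) (fun y => y * g y) y := by
      intro y
      by_cases h : y ∈ Set.Ioo R₁ R₂ <;> simp [Set.indicator_apply, h]
    simp_rw [h1]
    rw [setIntegral_indicator measurableSet_Ioo]
    have : Set.Ioi (0:ℝ) ∩ Set.Ioo R₁ R₂ = Set.Ioo R₁ R₂ :=
      Set.inter_eq_self_of_subset_right (fun y hy => lt_trans hR₁ hy.1)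
    rw [this]
  rw [this]
  push_cast [smul_eq_mul]
  ring

lemma J1 (R₁ R₂ L : ℝ) (h1 : 0 < R₁) (h2 : R₁ < R₂) (hL : 0 < L) :
    ∫ y in Set.Ioo R₁ R₂, y * ((L * y)⁻¹) ^ 2 = Real.log (R₂ / R₁) / L ^ 2 := by
  rw [← integral_Ioc_eq_integral_Ioo, ← intervalIntegral.integral_of_le h2.le]
  have hcong : Set.EqOn (fun y : ℝ => y * ((L * y)⁻¹) ^ 2) (fun y => (L^2)⁻¹ * y⁻¹)
      (Set.uIcc R₁ R₂) := by
    intro y hy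
    rw [Set.uIcc_of_le h2.le] at hy
    have hy0 : y ≠ 0 := (lt_of_lt_of_le h1 hy.1).ne'
    field_simp
  rw [intervalIntegral.integral_congr hcong, intervalIntegral.integral_const_mul,
    integral_inv_of_pos h1 (h1.trans h2)]
  field_simp

lemma J2 (R₁ R₂ : ℝ) (h1 : 0 < R₁) (h2 : R₁ < R₂) :
    ∫ y in Set.Ioo R₁ R₂, y * (Real.log y - Real.log R₁) ^ 2
      = R₂^2/2*(Real.log R₂ - Real.log R₁)^2 - R₂^2/2*(Real.log R₂ - Real.log R₁)
        + R₂^2/4 - R₁^2/4 := by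
  rw [← integral_Ioc_eq_integral_Ioo, ← intervalIntegral.integral_of_le h2.le]
  set F : ℝ → ℝ := fun y => y^2/2*(Real.log y - Real.log R₁)^2
    - y^2/2*(Real.log y - Real.log R₁) + y^2/4 with hF
  have key : ∫ y in R₁..R₂, y * (Real.log y - Real.log R₁) ^ 2 = F R₂ - F R₁ := by
    apply intervalIntegral.integral_eq_sub_of_hasDerivAt
    · intro y hy
      rw [Set.uIcc_of_le h2.le] at hy
      have hy0 : 0 < y := lt_of_lt_of_le h1 hy.1
      have hlog : HasDerivAt (fun y : ℝ => Real.log y - Real.log R₁) y⁻¹ y :=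
        (Real.hasDerivAt_log hy0.ne').sub_const _
      have hsq : HasDerivAt (fun y : ℝ => (Real.log y - Real.log R₁)^2)
          (2 * (Real.log y - Real.log R₁) ^ 1 * y⁻¹) y := hlog.pow 2
      have hy2 : HasDerivAt (fun y : ℝ => y^2/2) y y := by
        simpa using (hasDerivAt_pow 2 y).div_const 2
      have hy4 : HasDerivAt (fun y : ℝ => y^2/4) (y/2) y := by
        have := (hasDerivAt_pow 2 y).div_const 4
        norm_num at this
        exact this.congr_deriv (by ring)
      have := ((hy2.mul hsq).sub (hy2.mul hlog)).add hy4
      refine this.congr_deriv ?_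
      field_simp
      ring
    · apply ContinuousOn.intervalIntegrable
      have hsub : Set.uIcc R₁ R₂ ⊆ {(0:ℝ)}ᶜ := by
        rw [Set.uIcc_of_le h2.le]
        intro y hy
        exact (lt_of_lt_of_le h1 hy.1).ne'
      exact continuousOn_id.mul
        (((Real.continuousOn_log.mono hsub).sub continuousOn_const).pow 2)
  rw [key, hF]
  have : Real.log R₁ - Real.log R₁ = 0 := sub_self _
  simp [this]
  try ring


set_option maxHeartbeats 1000000 in
theorem stmt_5
    (R₁ R₂ : ℝ) (hR₁ : 0 < R₁) (hR : R₁ ≤ Real.exp (-2) * R₂)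
    (φ : EuclideanSpace ℝ (Fin 2) → ℝ)
    (hφ : ∀ x, φ x = Real.log (‖x‖ / R₁) / Real.log (R₂ / R₁)) :
    ∫ x in {x : EuclideanSpace ℝ (Fin 2) | R₁ < ‖x‖ ∧ ‖x‖ < R₂}, ‖fderiv ℝ φ x‖ ^ 2
      ≤ (4 / (R₂ ^ 2 * Real.log (R₂ / R₁))) *
        ∫ x in {x : EuclideanSpace ℝ (Fin 2) | R₁ < ‖x‖ ∧ ‖x‖ < R₂}, (φ x) ^ 2 := by
  set L := Real.log (R₂ / R₁) with hLdef
  have he1 : Real.exp (-2 : ℝ) < 1 := Real.exp_lt_one_iff.2 (by norm_num)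
  have hR₂ : 0 < R₂ := by
    by_contra h
    push_neg at h
    nlinarith [Real.exp_pos (-2 : ℝ)]
  have hRR : R₁ < R₂ := lt_of_le_of_lt hR (by nlinarith)
  have hdiv : Real.exp 2 ≤ R₂ / R₁ := by
    rw [le_div_iff₀ hR₁]
    have := mul_le_mul_of_nonneg_left hR (Real.exp_pos (2:ℝ)).le
    calc Real.exp 2 * R₁ ≤ Real.exp 2 * (Real.exp (-2) * R₂) := this
      _ = R₂ := by rw [← mul_assoc, ← Real.exp_add]; norm_num
  have hL2 : 2 ≤ L := by
    rw [hLdef, ← Real.log_exp (2:ℝ)]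
    exact Real.log_le_log (Real.exp_pos _) hdiv
  have hL : 0 < L := lt_of_lt_of_le two_pos hL2
  set A := {x : EuclideanSpace ℝ (Fin 2) | R₁ < ‖x‖ ∧ ‖x‖ < R₂} with hAdef
  have hmeasA : MeasurableSet A := by
    have : A = (fun x : EuclideanSpace ℝ (Fin 2) => ‖x‖) ⁻¹' Set.Ioo R₁ R₂ := rfl
    rw [this]
    exact measurableSet_Ioo.preimage continuous_norm.measurable
  -- LHS
  have hLHS : ∫ x in A, ‖fderiv ℝ φ x‖ ^ 2 = (2 * π) * (Real.log (R₂ / R₁) / L ^ 2) := by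
    have h1 : ∫ x in A, ‖fderiv ℝ φ x‖ ^ 2
        = ∫ x in A, (fun y : ℝ => ((L * y)⁻¹) ^ 2) ‖x‖ := by
      apply setIntegral_congr_fun hmeasA
      intro x hx
      have hx0 : x ≠ 0 := norm_pos_iff.1 (lt_trans hR₁ hx.1)
      simp only
      rw [grad_norm R₁ L hR₁ hL φ hφ x hx0]
    rw [h1, hAdef]
    exact (radial_int R₁ R₂ hR₁ (fun y => ((L * y)⁻¹) ^ 2)).trans
      (by rw [J1 R₁ R₂ L hR₁ hRR hL])
  -- RHS
  have hRHS : ∫ x in A, (φ x) ^ 2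
      = (2 * π) * ((L ^ 2)⁻¹ * (R₂^2/2*(Real.log R₂ - Real.log R₁)^2
          - R₂^2/2*(Real.log R₂ - Real.log R₁) + R₂^2/4 - R₁^2/4)) := by
    have h1 : ∫ x in A, (φ x) ^ 2
        = ∫ x in A, (fun y : ℝ => ((Real.log y - Real.log R₁) / L) ^ 2) ‖x‖ := by
      apply setIntegral_congr_fun hmeasA
      intro x hx
      have hx0 : ‖x‖ ≠ 0 := (lt_trans hR₁ hx.1).ne'
      simp only [hφ, Real.log_div hx0 hR₁.ne']
    have h2 : ∫ y in Set.Ioo R₁ R₂, y * ((Real.log y - Real.log R₁) / L) ^ 2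
        = (L ^ 2)⁻¹ * ∫ y in Set.Ioo R₁ R₂, y * (Real.log y - Real.log R₁) ^ 2 := by
      rw [← integral_const_mul]
      congr 1
      funext y
      field_simp
      try ring
    rw [h1, hAdef]
    exact (radial_int R₁ R₂ hR₁ (fun y => ((Real.log y - Real.log R₁) / L) ^ 2)).trans
      (by rw [h2, J2 R₁ R₂ hR₁ hRR])
  rw [hLHS, hRHS]
  -- final arithmetic
  have hlog : Real.log R₂ - Real.log R₁ = L := (Real.log_div hR₂.ne' hR₁.ne').symm
  rw [hlog, ← hLdef]
  set I := R₂^2/2*L^2 - R₂^2/2*L + R₂^2/4 - R₁^2/4 with hI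
  have key : R₁ ^ 2 ≤ R₂ ^ 2 * (L - 1) ^ 2 := by
    have h1 : R₁ ^ 2 ≤ R₂ ^ 2 := by nlinarith
    have h2 : (1:ℝ) ≤ (L - 1) ^ 2 := by nlinarith
    nlinarith
  have h4I : R₂ ^ 2 * L ^ 2 ≤ 4 * I := by rw [hI]; nlinarith
  have e1 : 2 * π * (L / L ^ 2) = (2 * π) / L := by
    field_simp
  have e2 : 4 / (R₂ ^ 2 * L) * (2 * π * ((L ^ 2)⁻¹ * I)) = (8 * π * I) / (R₂ ^ 2 * L ^ 3) := by
    field_simp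
    ring
  rw [e1, e2, div_le_div_iff₀ hL (by positivity)]
  nlinarith [mul_le_mul_of_nonneg_left h4I (mul_nonneg (mul_nonneg two_pos.le pi_pos.le) hL.le)]
end

section
/- Let ℓ > 0 and let Ω ⊆ ℝ × (0, ℓ) be a Lebesgue-measurable set such that A := volume(Ω ∩ {(x,y) : x > 0}) satisfies 0 < A < ∞. Define ψ : ℝ → ℝ by ψ(t) = 0 for t ≤ 0, ψ(t) = sin(πℓt/(2A)) for 0 < t < A/ℓ, and ψ(t) = 1 for t ≥ A/ℓ; and define h : ℝ → ℝ by h(t) = (πℓ/(2A))·cos(πℓt/(2A)) for 0 < t < A/ℓ and h(t) = 0 otherwise. Then ∫_Ω h(x)² d(x,y) ≤ (πℓ/(2A))² · ∫_Ω ψ(x)² d(x,y). -/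
open MeasureTheory Real

set_option maxHeartbeats 4000000 in
theorem stmt_6
    (ℓ : ℝ) (hℓ : 0 < ℓ)
    (Ω : Set (ℝ × ℝ)) (hΩm : MeasurableSet Ω)
    (hΩsub : Ω ⊆ Set.univ ×ˢ Set.Ioo 0 ℓ)
    (A : ℝ) (hApos : 0 < A)
    (hA : ENNReal.ofReal A = volume (Ω ∩ {p : ℝ × ℝ | 0 < p.1}))
    (ψ h : ℝ → ℝ)
    (hψ0 : ∀ t ≤ 0, ψ t = 0)
    (hψ1 : ∀ t, 0 < t → t < A / ℓ → ψ t = Real.sin (π * ℓ * t / (2 * A)))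
    (hψ2 : ∀ t, A / ℓ ≤ t → ψ t = 1)
    (hh1 : ∀ t, 0 < t → t < A / ℓ → h t = (π * ℓ / (2 * A)) * Real.cos (π * ℓ * t / (2 * A)))
    (hh0 : ∀ t, ¬ (0 < t ∧ t < A / ℓ) → h t = 0) :
    ∫ p in Ω, (h p.1) ^ 2 ≤ (π * ℓ / (2 * A)) ^ 2 * ∫ p in Ω, (ψ p.1) ^ 2 := by
  have hℓ0 : ℓ ≠ 0 := ne_of_gt hℓ
  have hA0 : A ≠ 0 := ne_of_gt hApos
  set c : ℝ := π * ℓ / (2 * A) with hcdef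
  set b : ℝ := A / ℓ with hbdef
  have hb : 0 < b := div_pos hApos hℓ
  have hc : 0 < c := by
    apply div_pos (mul_pos pi_pos hℓ); linarith
  have harg : ∀ t : ℝ, π * ℓ * t / (2 * A) = c * t := by
    intro t; rw [hcdef]; ring
  -- sets
  set T1 : Set (ℝ × ℝ) := Prod.fst ⁻¹' Set.Ioo 0 b with hT1def
  set T2 : Set (ℝ × ℝ) := Prod.fst ⁻¹' Set.Ici b with hT2def
  have hT1m : MeasurableSet T1 := measurable_fst measurableSet_Ioo
  have hT2m : MeasurableSet T2 := measurable_fst measurableSet_Ici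
  set S1 := Ω ∩ T1 with hS1def
  set S2 := Ω ∩ T2 with hS2def
  have hS1m : MeasurableSet S1 := hΩm.inter hT1m
  have hS2m : MeasurableSet S2 := hΩm.inter hT2m
  -- measure facts
  have hsplit : Ω ∩ {p : ℝ × ℝ | 0 < p.1} = S1 ∪ S2 := by
    ext p
    simp only [hS1def, hS2def, hT1def, hT2def, Set.mem_inter_iff, Set.mem_union,
      Set.mem_setOf_eq, Set.mem_preimage, Set.mem_Ioo, Set.mem_Ici]
    constructor
    · rintro ⟨hΩp, hx⟩
      rcases lt_or_ge p.1 b with hlt | hge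
      · exact Or.inl ⟨hΩp, hx, hlt⟩
      · exact Or.inr ⟨hΩp, hge⟩
    · rintro (⟨hΩp, hx, _⟩ | ⟨hΩp, hx⟩)
      · exact ⟨hΩp, hx⟩
      · exact ⟨hΩp, lt_of_lt_of_le hb hx⟩
  have hdisj : Disjoint S1 S2 := by
    rw [Set.disjoint_left]
    rintro p ⟨_, hp1⟩ ⟨_, hp2⟩
    have h1 : p.1 < b := (Set.mem_Ioo.mp hp1).2
    have h2 : b ≤ p.1 := hp2
    linarith
  have hmeasure : volume S1 + volume S2 = ENNReal.ofReal A := by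
    rw [← measure_union hdisj hS2m, ← hsplit, hA]
  have hS1fin : volume S1 < ⊤ := by
    apply lt_of_le_of_lt (le_trans (le_add_right le_rfl) hmeasure.le)
    exact ENNReal.ofReal_lt_top
  have hS2fin : volume S2 < ⊤ := by
    apply lt_of_le_of_lt (le_trans (le_add_left le_rfl) hmeasure.le)
    exact ENNReal.ofReal_lt_top
  set v1 : ℝ := (volume S1).toReal with hv1def
  set v2 : ℝ := (volume S2).toReal with hv2def
  have hv : v1 + v2 = A := by
    have := congrArg ENNReal.toReal hmeasure
    rwa [ENNReal.toReal_add hS1fin.ne hS2fin.ne, ENNReal.toReal_ofReal hApos.le] at this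
  -- integrability helper
  have intOn : ∀ (S : Set (ℝ × ℝ)), volume S < ⊤ →
      ∀ (f : ℝ → ℝ), Measurable f → ∀ C : ℝ, (∀ x, |f x| ≤ C) →
      IntegrableOn (fun p : ℝ × ℝ => f p.1) S := by
    intro S hSfin f hf C hC
    refine Integrable.mono' ((integrableOn_const_iff).mpr (Or.inr hSfin))
      ((hf.comp measurable_fst).aestronglyMeasurable) (ae_of_all _ fun p => hC p.1)
  -- rewrite h
  have hfunh : (fun p : ℝ × ℝ => (h p.1) ^ 2) =
      fun p : ℝ × ℝ => T1.indicator (fun q : ℝ × ℝ => (c * Real.cos (c * q.1)) ^ 2) p := by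
    funext p
    by_cases hp : p ∈ T1
    · have hp' : 0 < p.1 ∧ p.1 < b := by
        simpa only [hT1def, Set.mem_preimage, Set.mem_Ioo] using hp
      rw [Set.indicator_of_mem hp, hh1 p.1 hp'.1 hp'.2, harg]
    · have hp' : ¬ (0 < p.1 ∧ p.1 < b) := by
        simpa only [hT1def, Set.mem_preimage, Set.mem_Ioo] using hp
      rw [Set.indicator_of_notMem hp, hh0 p.1 hp']
      norm_num
  have eA : ∫ p in Ω, (h p.1) ^ 2 = ∫ p in S1, (c * Real.cos (c * p.1)) ^ 2 := by
    rw [hfunh, setIntegral_indicator hT1m]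
  -- rewrite ψ
  have hfunψ : (fun p : ℝ × ℝ => (ψ p.1) ^ 2) =
      fun p : ℝ × ℝ => T1.indicator (fun q : ℝ × ℝ => (Real.sin (c * q.1)) ^ 2) p
        + T2.indicator (fun _ => (1 : ℝ)) p := by
    funext p
    by_cases hp1 : p ∈ T1
    · have hp' : 0 < p.1 ∧ p.1 < b := by
        simpa only [hT1def, Set.mem_preimage, Set.mem_Ioo] using hp1
      have hp2 : p ∉ T2 := by
        simp only [hT2def, Set.mem_preimage, Set.mem_Ici, not_le]
        exact hp'.2
      rw [Set.indicator_of_mem hp1, Set.indicator_of_notMem hp2,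
        hψ1 p.1 hp'.1 hp'.2, harg, add_zero]
    · by_cases hp2 : p ∈ T2
      · have hble : b ≤ p.1 := by
          simpa only [hT2def, Set.mem_preimage, Set.mem_Ici] using hp2
        rw [Set.indicator_of_notMem hp1, Set.indicator_of_mem hp2, hψ2 p.1 hble]
        norm_num
      · have h1 : ¬ (0 < p.1 ∧ p.1 < b) := by
          simpa only [hT1def, Set.mem_preimage, Set.mem_Ioo] using hp1
        have h2 : p.1 < b := by
          have := by simpa only [hT2def, Set.mem_preimage, Set.mem_Ici] using hp2
          exact lt_of_not_ge this
        have h3 : p.1 ≤ 0 := by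
          by_contra hx
          exact h1 ⟨lt_of_not_ge hx, h2⟩
        rw [Set.indicator_of_notMem hp1, Set.indicator_of_notMem hp2, hψ0 p.1 h3]
        norm_num
  have indic_int : ∀ (T : Set (ℝ × ℝ)), MeasurableSet T → volume (Ω ∩ T) < ⊤ →
      ∀ (f : ℝ → ℝ), Measurable f → ∀ C : ℝ, (∀ x, |f x| ≤ C) →
      Integrable (fun p : ℝ × ℝ => T.indicator (fun q : ℝ × ℝ => f q.1) p)
        (volume.restrict Ω) := by
    intro T hTm hfin f hf C hC
    rw [show (fun p : ℝ × ℝ => T.indicator (fun q : ℝ × ℝ => f q.1) p)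
        = T.indicator (fun q : ℝ × ℝ => f q.1) from rfl,
      integrable_indicator_iff hTm]
    rw [IntegrableOn, Measure.restrict_restrict hTm, Set.inter_comm]
    exact intOn _ hfin f hf C hC
  have habs_sin : ∀ x : ℝ, |(Real.sin (c * x)) ^ 2| ≤ 1 := by
    intro x
    rw [abs_pow]
    calc |Real.sin (c * x)| ^ 2 ≤ 1 ^ 2 := by
          apply pow_le_pow_left₀ (abs_nonneg _) (abs_sin_le_one _)
      _ = 1 := one_pow 2
  have habs_cos : ∀ x : ℝ, |(Real.cos (c * x)) ^ 2| ≤ 1 := by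
    intro x
    rw [abs_pow]
    calc |Real.cos (c * x)| ^ 2 ≤ 1 ^ 2 := by
          apply pow_le_pow_left₀ (abs_nonneg _) (abs_cos_le_one _)
      _ = 1 := one_pow 2
  have hmes_sin : Measurable fun x : ℝ => (Real.sin (c * x)) ^ 2 :=
    ((Real.measurable_sin.comp (measurable_id.const_mul c)).pow_const 2)
  have hmes_cos : Measurable fun x : ℝ => (Real.cos (c * x)) ^ 2 :=
    ((Real.measurable_cos.comp (measurable_id.const_mul c)).pow_const 2)
  have hmes_cos2 : Measurable fun x : ℝ => Real.cos (2 * c * x) :=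
    Real.measurable_cos.comp (measurable_id.const_mul (2 * c))
  have eB : ∫ p in Ω, (ψ p.1) ^ 2 = (∫ p in S1, (Real.sin (c * p.1)) ^ 2) + v2 := by
    rw [hfunψ, integral_add
      (indic_int T1 hT1m hS1fin _ hmes_sin 1 habs_sin)
      (indic_int T2 hT2m hS2fin _ measurable_const 1 (by norm_num))]
    congr 1
    · rw [setIntegral_indicator hT1m]
    · rw [setIntegral_indicator hT2m, setIntegral_const, smul_eq_mul, mul_one]; rfl
  -- the rectangle
  set R : Set (ℝ × ℝ) := Set.Ioo 0 b ×ˢ Set.Ioo 0 ℓ with hRdef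
  have hRfin : volume R < ⊤ := by
    rw [hRdef, Measure.volume_eq_prod, Measure.prod_prod, Real.volume_Ioo, Real.volume_Ioo]
    exact ENNReal.mul_lt_top ENNReal.ofReal_lt_top ENNReal.ofReal_lt_top
  have hS1R : S1 ⊆ R := by
    rintro p ⟨hpΩ, hp1⟩
    have hy := (hΩsub hpΩ).2
    exact ⟨hp1, hy⟩
  -- integral over the rectangle
  have eR : ∫ p in R, (Real.cos (2 * c * p.1) + 1) = A := by
    have : (fun p : ℝ × ℝ => Real.cos (2 * c * p.1) + 1)
        = fun p : ℝ × ℝ => (Real.cos (2 * c * p.1) + 1) * (fun _ : ℝ => (1 : ℝ)) p.2 := by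
      funext p; ring
    rw [this, hRdef, Measure.volume_eq_prod,
      setIntegral_prod_mul (fun x : ℝ => Real.cos (2 * c * x) + 1) (fun _ : ℝ => (1 : ℝ))
        (Set.Ioo 0 b) (Set.Ioo 0 ℓ)]
    have h1d : ∫ x in Set.Ioo (0:ℝ) b, (Real.cos (2 * c * x) + 1) = b := by
      rw [← integral_Ioc_eq_integral_Ioo, ← intervalIntegral.integral_of_le hb.le]
      rw [intervalIntegral.integral_add]
      · have hcomp : ∫ x in (0:ℝ)..b, Real.cos (2 * c * x) = 0 := by
          have h2c : (2 * c : ℝ) ≠ 0 := by positivity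
          have hcm := intervalIntegral.integral_comp_mul_left (a := 0) (b := b)
            (fun x => Real.cos x) h2c
          rw [hcm]
          have h2cb : 2 * c * b = π := by
            rw [hcdef, hbdef]; field_simp
          rw [mul_zero, h2cb, integral_cos, Real.sin_pi, Real.sin_zero]
          simp
        rw [hcomp, intervalIntegral.integral_const, zero_add, smul_eq_mul, sub_zero, mul_one]
      · apply Continuous.intervalIntegrable
        exact Real.continuous_cos.comp (continuous_const.mul continuous_id)
      · exact intervalIntegrable_const
    rw [h1d]
    have h2d : ∫ _ in Set.Ioo (0:ℝ) ℓ, (1:ℝ) = ℓ := by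
      rw [setIntegral_const, smul_eq_mul, mul_one, measureReal_def, Real.volume_Ioo]
      rw [ENNReal.toReal_ofReal (by linarith : (0:ℝ) ≤ ℓ - 0), sub_zero]
    rw [h2d, hbdef]
    field_simp
  -- comparison
  have hintR : IntegrableOn (fun p : ℝ × ℝ => Real.cos (2 * c * p.1) + 1) R := by
    apply intOn R hRfin _ (hmes_cos2.add_const 1) 2
    intro x
    have h1 := Real.neg_one_le_cos (2 * c * x)
    have h2 := Real.cos_le_one (2 * c * x)
    rw [abs_le]; constructor <;> linarith
  have hmono : ∫ p in S1, (Real.cos (2 * c * p.1) + 1)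
      ≤ ∫ p in R, (Real.cos (2 * c * p.1) + 1) := by
    apply setIntegral_mono_set hintR
    · apply ae_of_all
      intro p
      have := Real.neg_one_le_cos (2 * c * p.1)
      simp only [Pi.zero_apply]
      linarith
    · exact HasSubset.Subset.eventuallyLE hS1R
  have hintS1cos2 : IntegrableOn (fun p : ℝ × ℝ => Real.cos (2 * c * p.1)) S1 :=
    intOn S1 hS1fin _ hmes_cos2 1 (fun x => Real.abs_cos_le_one _)
  have eS1split : ∫ p in S1, (Real.cos (2 * c * p.1) + 1)
      = (∫ p in S1, Real.cos (2 * c * p.1)) + v1 := by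
    have hint1 : IntegrableOn (fun _ : ℝ × ℝ => (1 : ℝ)) S1 :=
      (integrableOn_const_iff).mpr (Or.inr hS1fin)
    rw [integral_add hintS1cos2 hint1]
    rw [setIntegral_const, smul_eq_mul, mul_one]; rfl
  have hkey : ∫ p in S1, Real.cos (2 * c * p.1) ≤ v2 := by
    have := hmono
    rw [eS1split, eR] at this
    linarith
  -- trig identity
  have htrig : (∫ p in S1, (Real.cos (c * p.1)) ^ 2)
      - (∫ p in S1, (Real.sin (c * p.1)) ^ 2) = ∫ p in S1, Real.cos (2 * c * p.1) := by
    rw [← integral_sub (intOn S1 hS1fin _ hmes_cos 1 habs_cos)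
      (intOn S1 hS1fin _ hmes_sin 1 habs_sin)]
    apply setIntegral_congr_fun hS1m
    intro p _
    have h1 := Real.cos_two_mul (c * p.1)
    have h2 := Real.sin_sq_add_cos_sq (c * p.1)
    have h3 : 2 * (c * p.1) = 2 * c * p.1 := by ring
    have h4 : Real.cos (2 * c * p.1) = 2 * Real.cos (c * p.1) ^ 2 - 1 := by
      rw [← h3]; exact h1
    show Real.cos (c * p.1) ^ 2 - Real.sin (c * p.1) ^ 2 = Real.cos (2 * c * p.1)
    linarith
  -- finish
  have eLHS : ∫ p in S1, (c * Real.cos (c * p.1)) ^ 2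
      = c ^ 2 * ∫ p in S1, (Real.cos (c * p.1)) ^ 2 := by
    rw [← integral_const_mul (c ^ 2) (fun p : ℝ × ℝ => (Real.cos (c * p.1)) ^ 2)]
    apply setIntegral_congr_fun hS1m
    intro p _
    ring
  rw [eA, eB, eLHS]
  have hfinal : (∫ p in S1, (Real.cos (c * p.1)) ^ 2)
      ≤ (∫ p in S1, (Real.sin (c * p.1)) ^ 2) + v2 := by linarith [htrig, hkey]
  exact mul_le_mul_of_nonneg_left hfinal (sq_nonneg c)
end

section
/- Let 0 < R₁ < R₂ and let φ : ℝ² → ℝ be continuously differentiable with φ(x) = 0 for every x with ‖x‖ = R₁. Then ∫_{A(R₁,R₂)} φ(x)² dx ≤ (R₂² · log(R₂/R₁) / 2) · ∫_{A(R₁,R₂)} ‖fderiv ℝ φ x‖² dx. -/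
open MeasureTheory Real Set

noncomputable def Fm (p : ℝ × ℝ) : EuclideanSpace ℝ (Fin 2) :=
  (((MeasurableEquiv.toLp 2 (Fin 2 → ℝ)).symm).trans MeasurableEquiv.finTwoArrow).symm p

lemma measurePreserving_Fm : MeasurePreserving Fm volume volume :=
  (((MeasureTheory.volume_preserving_finTwoArrow ℝ).comp
    (EuclideanSpace.volume_preserving_symm_measurableEquiv_toLp (Fin 2)))).symm
    (((MeasurableEquiv.toLp 2 (Fin 2 → ℝ)).symm).trans MeasurableEquiv.finTwoArrow)

lemma Fm_apply (p : ℝ × ℝ) : Fm p = (WithLp.equiv 2 (Fin 2 → ℝ)).symm ![p.1, p.2] := by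
  ext i
  fin_cases i <;> rfl

lemma norm_Fm (p : ℝ × ℝ) : ‖Fm p‖ = √(p.1 ^ 2 + p.2 ^ 2) := by
  rw [Fm_apply, EuclideanSpace.norm_eq]
  simp [Fin.sum_univ_two, sq_abs]

lemma Fm_smul (r : ℝ) (p : ℝ × ℝ) : Fm (r • p) = r • Fm p := by
  simp only [Fm_apply]
  ext i
  fin_cases i <;>
    simp [WithLp.equiv_symm_apply, Prod.smul_fst, Prod.smul_snd, smul_eq_mul]

lemma continuous_Fm : Continuous Fm := by
  simp only [funext Fm_apply]
  exact Continuous.comp (PiLp.continuousLinearEquiv 2 ℝ (fun _ : Fin 2 => ℝ)).symm.continuous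
    (by
      apply continuous_pi
      intro i
      fin_cases i
      · simpa using continuous_fst
      · simpa using continuous_snd)

lemma radial_bound (R₁ R₂ : ℝ) (hR₁ : 0 < R₁) (hR₁₂ : R₁ < R₂)
    (φ : EuclideanSpace ℝ (Fin 2) → ℝ) (hφ : ContDiff ℝ 1 φ)
    (hφ0 : ∀ x : EuclideanSpace ℝ (Fin 2), ‖x‖ = R₁ → φ x = 0)
    (v : EuclideanSpace ℝ (Fin 2)) (hv : ‖v‖ = 1)
    {r : ℝ} (hr1 : R₁ ≤ r) (hr2 : r ≤ R₂) :
    (φ (r • v)) ^ 2 ≤ Real.log (R₂ / R₁) *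
      ∫ s in Ioo R₁ R₂, s * ‖fderiv ℝ φ (s • v)‖ ^ 2 := by
  set u : EuclideanSpace ℝ (Fin 2) → ℝ := fun x => ‖fderiv ℝ φ x‖ with hu
  set g' : ℝ → ℝ := fun s => (fderiv ℝ φ (s • v)) v with hg'
  have hsmulv : Continuous fun s : ℝ => s • v := continuous_id.smul continuous_const
  have hfd : Continuous (fderiv ℝ φ) := hφ.continuous_fderiv one_ne_zero
  have hg'cont : Continuous g' := (hfd.comp hsmulv).clm_apply continuous_const
  have hucont : Continuous u := hfd.norm
  -- FTC representation
  have hderiv : ∀ s ∈ uIcc R₁ r, HasDerivAt (fun t : ℝ => φ (t • v)) (g' s) s := by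
    intro s _
    have h1 : HasDerivAt (fun t : ℝ => t • v) ((1 : ℝ) • v) s := (hasDerivAt_id s).smul_const v
    have h2 : HasFDerivAt φ (fderiv ℝ φ (s • v)) (s • v) :=
      (hφ.differentiable one_ne_zero (s • v)).hasFDerivAt
    have h3 := h2.comp_hasDerivAt s h1
    rw [one_smul] at h3
    exact h3
  have hrepr : φ (r • v) = ∫ s in R₁..r, g' s := by
    rw [intervalIntegral.integral_eq_sub_of_hasDerivAt hderiv
      (hg'cont.intervalIntegrable _ _)]
    rw [hφ0 (R₁ • v) (by rw [norm_smul, hv, mul_one]; exact abs_of_pos hR₁), sub_zero]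
  set μ : Measure ℝ := volume.restrict (Ioo R₁ r) with hμ
  set f1 : ℝ → ℝ := fun s => √(s⁻¹) with hf1
  set f2 : ℝ → ℝ := fun s => √s * |g' s| with hf2
  have hmeasIoo : MeasurableSet (Ioo R₁ r) := measurableSet_Ioo
  -- integrability of s⁻¹ on Ioo R₁ r
  have hinv_int : IntegrableOn (fun s : ℝ => s⁻¹) (Ioo R₁ r) := by
    refine ((continuousOn_inv₀.mono ?_).integrableOn_compact isCompact_Icc).mono_set
      Ioo_subset_Icc_self
    intro x hx
    exact ne_of_gt (lt_of_lt_of_le hR₁ hx.1)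
  have hsg_int : IntegrableOn (fun s : ℝ => s * (g' s) ^ 2) (Ioo R₁ r) :=
    ((continuous_id.mul (hg'cont.pow 2)).continuousOn.integrableOn_compact isCompact_Icc).mono_set
      Ioo_subset_Icc_self
  -- a.e. identities on Ioo R₁ r
  have hae_pos : ∀ᵐ s ∂μ, s ∈ Ioo R₁ r := (ae_restrict_iff' hmeasIoo).mpr
    (Filter.Eventually.of_forall fun s hs => hs)
  have hf1sq : (fun s => f1 s ^ (2:ℕ)) =ᵐ[μ] fun s => s⁻¹ := by
    filter_upwards [hae_pos] with s hs
    exact Real.sq_sqrt (inv_nonneg.mpr (le_of_lt (lt_trans hR₁ hs.1)))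
  have hf2sq : (fun s => f2 s ^ (2:ℕ)) =ᵐ[μ] fun s => s * (g' s) ^ 2 := by
    filter_upwards [hae_pos] with s hs
    rw [hf2]
    rw [mul_pow, Real.sq_sqrt (le_of_lt (lt_trans hR₁ hs.1)), sq_abs]
  have h2e : (ENNReal.ofReal 2 : ENNReal) = 2 := by
    rw [show (2:ℝ) = ((2:ℕ):ℝ) by norm_num, ENNReal.ofReal_natCast]; norm_num
  have hf1m : AEStronglyMeasurable f1 μ :=
    (Real.continuous_sqrt.measurable.comp measurable_inv).aestronglyMeasurable
  have hf2m : AEStronglyMeasurable f2 μ :=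
    ((Real.continuous_sqrt.mul hg'cont.abs)).aestronglyMeasurable
  have hf1L : MemLp f1 (ENNReal.ofReal 2) μ := by
    rw [h2e]
    exact (memLp_two_iff_integrable_sq hf1m).mpr (hinv_int.congr hf1sq.symm)
  have hf2L : MemLp f2 (ENNReal.ofReal 2) μ := by
    rw [h2e]
    exact (memLp_two_iff_integrable_sq hf2m).mpr (hsg_int.congr hf2sq.symm)
  -- Cauchy–Schwarz (Hölder with p = q = 2)
  have hCS := MeasureTheory.integral_mul_le_Lp_mul_Lq_of_nonneg
    (Real.HolderTriple.mk (p := 2) (q := 2) (r := 1) (by norm_num) (by norm_num) (by norm_num))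
    (Filter.Eventually.of_forall fun s => Real.sqrt_nonneg _)
    (Filter.Eventually.of_forall fun s => mul_nonneg (Real.sqrt_nonneg _) (abs_nonneg _))
    hf1L hf2L
  -- identify the two factors
  set A : ℝ := ∫ s in Ioo R₁ r, s⁻¹ with hA
  set B : ℝ := ∫ s in Ioo R₁ r, s * (g' s) ^ 2 with hB
  have hrpow : ∀ f : ℝ → ℝ, (fun s => f s ^ (2:ℝ)) = fun s => f s ^ (2:ℕ) := by
    intro f; funext s; rw [show (2:ℝ) = ((2:ℕ):ℝ) by norm_num, Real.rpow_natCast]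
  have hIA : ∫ s, f1 s ^ (2:ℝ) ∂μ = A := by
    rw [hrpow f1]; exact integral_congr_ae hf1sq
  have hIB : ∫ s, f2 s ^ (2:ℝ) ∂μ = B := by
    rw [hrpow f2]; exact integral_congr_ae hf2sq
  rw [hIA, hIB] at hCS
  have hAnn : 0 ≤ A := setIntegral_nonneg hmeasIoo fun s hs =>
    inv_nonneg.mpr (le_of_lt (lt_trans hR₁ hs.1))
  have hBnn : 0 ≤ B := setIntegral_nonneg hmeasIoo fun s hs =>
    mul_nonneg (le_of_lt (lt_trans hR₁ hs.1)) (sq_nonneg _)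
  rw [← Real.sqrt_eq_rpow, ← Real.sqrt_eq_rpow] at hCS
  -- |φ (r • v)| ≤ ∫ f1 * f2
  have habs : |φ (r • v)| ≤ ∫ s, f1 s * f2 s ∂μ := by
    rw [hrepr]
    have h1 : |∫ s in R₁..r, g' s| ≤ ∫ s in R₁..r, |g' s| :=
      intervalIntegral.abs_integral_le_integral_abs hr1
    have h2 : ∫ s in R₁..r, |g' s| = ∫ s, f1 s * f2 s ∂μ := by
      rw [intervalIntegral.integral_of_le hr1, ← integral_Ioc_eq_integral_Ioo]
      refine integral_congr_ae ?_
      refine ((ae_restrict_iff' measurableSet_Ioc).mpr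
        (Filter.Eventually.of_forall fun s hs => ?_))
      have hs0 : (0:ℝ) < s := lt_trans hR₁ hs.1
      show |g' s| = f1 s * f2 s
      simp only [hf1, hf2]
      rw [← mul_assoc, ← Real.sqrt_mul (inv_nonneg.mpr hs0.le),
        inv_mul_cancel₀ hs0.ne', Real.sqrt_one, one_mul]
    exact h2 ▸ h1
  have hφsq : (φ (r • v)) ^ 2 ≤ A * B := by
    have h3 : |φ (r • v)| ≤ √A * √B := le_trans habs hCS
    calc (φ (r • v)) ^ 2 = |φ (r • v)| ^ 2 := (sq_abs _).symm
      _ ≤ (√A * √B) ^ 2 := pow_le_pow_left₀ (abs_nonneg _) h3 2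
      _ = A * B := by rw [mul_pow, Real.sq_sqrt hAnn, Real.sq_sqrt hBnn]
  -- A = log (r / R₁) ≤ log (R₂ / R₁)
  have hAval : A = Real.log (r / R₁) := by
    rw [hA, ← integral_Ioc_eq_integral_Ioo, ← intervalIntegral.integral_of_le hr1,
      integral_inv_of_pos hR₁ (lt_of_lt_of_le hR₁ hr1)]
  have hAle : A ≤ Real.log (R₂ / R₁) := by
    rw [hAval]
    exact Real.log_le_log (div_pos (lt_of_lt_of_le hR₁ hr1) hR₁) (by gcongr)
  -- B ≤ ∫ s in Ioo R₁ R₂, s * u (s • v) ^ 2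
  have husq_int : IntegrableOn (fun s : ℝ => s * u (s • v) ^ 2) (Ioo R₁ R₂) :=
    ((continuous_id.mul (((hucont.comp hsmulv).pow 2))).continuousOn.integrableOn_compact
      isCompact_Icc).mono_set Ioo_subset_Icc_self
  have hptwise : ∀ s : ℝ, (g' s) ^ 2 ≤ u (s • v) ^ 2 := by
    intro s
    have := (fderiv ℝ φ (s • v)).le_opNorm v
    rw [hv, mul_one] at this
    calc (g' s) ^ 2 = |g' s| ^ 2 := (sq_abs _).symm
      _ ≤ u (s • v) ^ 2 := by
          apply pow_le_pow_left₀ (abs_nonneg _)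
          simpa [hg', hu] using this
  have hBle : B ≤ ∫ s in Ioo R₁ R₂, s * u (s • v) ^ 2 := by
    have step1 : B ≤ ∫ s in Ioo R₁ r, s * u (s • v) ^ 2 := by
      refine setIntegral_mono_on hsg_int (husq_int.mono_set ?_) hmeasIoo ?_
      · exact Ioo_subset_Ioo le_rfl hr2
      · intro s hs
        exact mul_le_mul_of_nonneg_left (hptwise s) (le_of_lt (lt_trans hR₁ hs.1))
    refine le_trans step1 (setIntegral_mono_set husq_int ?_ ?_)
    · refine (ae_restrict_iff' measurableSet_Ioo).mpr
        (Filter.Eventually.of_forall fun s hs => ?_)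
      exact mul_nonneg (le_of_lt (lt_trans hR₁ hs.1)) (sq_nonneg _)
    · exact HasSubset.Subset.eventuallyLE (Ioo_subset_Ioo le_rfl hr2)
  refine le_trans hφsq (mul_le_mul hAle hBle hBnn (Real.log_nonneg ?_))
  rw [le_div_iff₀ hR₁]
  linarith

lemma polar_eq (R₁ R₂ : ℝ) (hR₁ : 0 < R₁)
    (h : EuclideanSpace ℝ (Fin 2) → ℝ) :
    ∫ x in {x : EuclideanSpace ℝ (Fin 2) | R₁ < ‖x‖ ∧ ‖x‖ < R₂}, h x
      = ∫ p in Ioo R₁ R₂ ×ˢ Ioo (-π) π,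
          p.1 * h (p.1 • Fm (Real.cos p.2, Real.sin p.2)) := by
  set S := {x : EuclideanSpace ℝ (Fin 2) | R₁ < ‖x‖ ∧ ‖x‖ < R₂} with hS
  set T := {p : ℝ × ℝ | R₁ < √(p.1 ^ 2 + p.2 ^ 2) ∧ √(p.1 ^ 2 + p.2 ^ 2) < R₂} with hT
  have hTmeas : MeasurableSet T := by
    apply MeasurableSet.inter
    · exact measurableSet_lt measurable_const
        (((measurable_fst.pow_const 2).add (measurable_snd.pow_const 2)).sqrt)
    · exact measurableSet_lt
        (((measurable_fst.pow_const 2).add (measurable_snd.pow_const 2)).sqrt) measurable_const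
  have step1 : ∫ x in S, h x = ∫ p in Fm ⁻¹' S, h (Fm p) :=
    (measurePreserving_Fm.setIntegral_preimage_emb
      ((((MeasurableEquiv.toLp 2 (Fin 2 → ℝ)).symm).trans
        MeasurableEquiv.finTwoArrow).symm).measurableEmbedding h S).symm
  have step2 : Fm ⁻¹' S = T := by
    ext p
    simp [hS, hT, norm_Fm]
  have step3 : ∫ p in T, h (Fm p) = ∫ p, T.indicator (fun p => h (Fm p)) p :=
    (integral_indicator hTmeas).symm
  have step4 := integral_comp_polarCoord_symm (T.indicator (fun p => h (Fm p)))
  rw [step1, step2, step3, ← step4]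
  set P := Ioo R₁ R₂ ×ˢ Ioo (-π) π with hP
  have hPmeas : MeasurableSet P := measurableSet_Ioo.prod measurableSet_Ioo
  have step5 : ∫ p in polarCoord.target,
      p.1 • T.indicator (fun p => h (Fm p)) (polarCoord.symm p)
      = ∫ p in polarCoord.target,
          P.indicator (fun p => p.1 * h (p.1 • Fm (Real.cos p.2, Real.sin p.2))) p := by
    refine setIntegral_congr_fun (polarCoord.open_target.measurableSet) fun p hp => ?_
    have hp1 : 0 < p.1 := hp.1
    have hsq : √((p.1 * Real.cos p.2) ^ 2 + (p.1 * Real.sin p.2) ^ 2) = p.1 := by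
      have : (p.1 * Real.cos p.2) ^ 2 + (p.1 * Real.sin p.2) ^ 2 = p.1 ^ 2 := by
        have := Real.sin_sq_add_cos_sq p.2; nlinarith [this]
      rw [this, Real.sqrt_sq hp1.le]
    have hFm : Fm (polarCoord.symm p) = p.1 • Fm (Real.cos p.2, Real.sin p.2) := by
      rw [polarCoord_symm_apply, show (p.1 * Real.cos p.2, p.1 * Real.sin p.2)
        = p.1 • ((Real.cos p.2, Real.sin p.2) : ℝ × ℝ) by
          simp [Prod.smul_mk, smul_eq_mul], Fm_smul]
    by_cases hmem : R₁ < p.1 ∧ p.1 < R₂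
    · have hTm : polarCoord.symm p ∈ T := by
        simp only [hT, Set.mem_setOf_eq, polarCoord_symm_apply, hsq]
        exact hmem
      have hPm : p ∈ P := ⟨⟨hmem.1, hmem.2⟩, hp.2⟩
      rw [Set.indicator_of_mem hTm, Set.indicator_of_mem hPm, hFm, smul_eq_mul]
    · have hTm : polarCoord.symm p ∉ T := by
        simp only [hT, Set.mem_setOf_eq, polarCoord_symm_apply, hsq]
        exact hmem
      have hPm : p ∉ P := fun hc => hmem ⟨hc.1.1, hc.1.2⟩
      rw [Set.indicator_of_notMem hTm, Set.indicator_of_notMem hPm, smul_zero]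
  rw [step5, setIntegral_indicator hPmeas,
    Set.inter_eq_self_of_subset_right ?_]
  intro p hp
  exact ⟨lt_trans hR₁ hp.1.1, hp.2⟩

theorem stmt_8
    (R₁ R₂ : ℝ) (hR₁ : 0 < R₁) (hR₁₂ : R₁ < R₂)
    (φ : EuclideanSpace ℝ (Fin 2) → ℝ) (hφ : ContDiff ℝ 1 φ)
    (hφ0 : ∀ x : EuclideanSpace ℝ (Fin 2), ‖x‖ = R₁ → φ x = 0) :
    ∫ x in {x : EuclideanSpace ℝ (Fin 2) | R₁ < ‖x‖ ∧ ‖x‖ < R₂}, (φ x) ^ 2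
      ≤ (R₂ ^ 2 * Real.log (R₂ / R₁) / 2) *
        ∫ x in {x : EuclideanSpace ℝ (Fin 2) | R₁ < ‖x‖ ∧ ‖x‖ < R₂}, ‖fderiv ℝ φ x‖ ^ 2 := by
  set u : EuclideanSpace ℝ (Fin 2) → ℝ := fun x => ‖fderiv ℝ φ x‖ with hu
  set v : ℝ → EuclideanSpace ℝ (Fin 2) := fun θ => Fm (Real.cos θ, Real.sin θ) with hv
  have hvnorm : ∀ θ, ‖v θ‖ = 1 := by
    intro θ
    rw [hv]
    simp only [norm_Fm]
    rw [Real.cos_sq_add_sin_sq, Real.sqrt_one]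
  have hφc : Continuous φ := hφ.continuous
  have hucont : Continuous u := (hφ.continuous_fderiv one_ne_zero).norm
  have hvcont : Continuous v :=
    continuous_Fm.comp (Real.continuous_cos.prodMk Real.continuous_sin)
  set P := Ioo R₁ R₂ ×ˢ Ioo (-π) π with hP
  have hPmeas : MeasurableSet P := measurableSet_Ioo.prod measurableSet_Ioo
  -- integrability of continuous functions on products of bounded intervals
  have hintOn : ∀ (a b c d : ℝ) (f : ℝ × ℝ → ℝ), Continuous f →
      IntegrableOn f (Ioo a b ×ˢ Ioo c d) := by
    intro a b c d f hf
    exact (hf.continuousOn.integrableOn_compact (isCompact_Icc.prod isCompact_Icc)).mono_set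
      (Set.prod_mono Ioo_subset_Icc_self Ioo_subset_Icc_self)
  set W : ℝ → ℝ := fun θ => ∫ s in R₁..R₂, s * u (s • v θ) ^ 2 with hW
  have hWcont : Continuous W := by
    rw [hW]
    apply intervalIntegral.continuous_parametric_intervalIntegral_of_continuous'
    exact (continuous_snd.mul (((hucont.comp
      (continuous_snd.smul (hvcont.comp continuous_fst))).pow 2)))
  have hWeq : ∀ θ, W θ = ∫ s in Ioo R₁ R₂, s * u (s • v θ) ^ 2 := by
    intro θ
    show (∫ s in R₁..R₂, s * u (s • v θ) ^ 2) = _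
    rw [intervalIntegral.integral_of_le hR₁₂.le, integral_Ioc_eq_integral_Ioo]
  have hW0 : ∀ θ, 0 ≤ W θ := by
    intro θ
    rw [hWeq]
    exact setIntegral_nonneg measurableSet_Ioo fun s hs =>
      mul_nonneg (le_of_lt (lt_trans hR₁ hs.1)) (sq_nonneg _)
  -- polar representations
  have hL : ∫ x in {x : EuclideanSpace ℝ (Fin 2) | R₁ < ‖x‖ ∧ ‖x‖ < R₂}, (φ x) ^ 2
      = ∫ p in P, p.1 * (φ (p.1 • v p.2)) ^ 2 :=
    polar_eq R₁ R₂ hR₁ (fun x => (φ x) ^ 2)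
  have hR : ∫ x in {x : EuclideanSpace ℝ (Fin 2) | R₁ < ‖x‖ ∧ ‖x‖ < R₂}, u x ^ 2
      = ∫ p in P, p.1 * (u (p.1 • v p.2)) ^ 2 :=
    polar_eq R₁ R₂ hR₁ (fun x => (u x) ^ 2)
  rw [show (fun x : EuclideanSpace ℝ (Fin 2) => ‖fderiv ℝ φ x‖ ^ 2)
    = fun x => u x ^ 2 from rfl, hL, hR]
  -- step A: pointwise radial bound
  have hstepA : ∫ p in P, p.1 * (φ (p.1 • v p.2)) ^ 2
      ≤ ∫ p in P, Real.log (R₂ / R₁) * (p.1 * W p.2) := by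
    refine setIntegral_mono_on
      (hintOn _ _ _ _ _ (continuous_fst.mul ((hφc.comp
        (continuous_fst.smul (hvcont.comp continuous_snd))).pow 2)))
      (hintOn _ _ _ _ _ (continuous_const.mul
        (continuous_fst.mul (hWcont.comp continuous_snd))))
      hPmeas fun p hp => ?_
    have hrad := radial_bound R₁ R₂ hR₁ hR₁₂ φ hφ hφ0 (v p.2) (hvnorm p.2)
      hp.1.1.le hp.1.2.le
    rw [← hWeq] at hrad
    calc p.1 * (φ (p.1 • v p.2)) ^ 2
        ≤ p.1 * (Real.log (R₂ / R₁) * W p.2) :=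
          mul_le_mul_of_nonneg_left hrad (le_of_lt (lt_trans hR₁ hp.1.1))
      _ = Real.log (R₂ / R₁) * (p.1 * W p.2) := by ring
  -- step B: factorize
  have hstepB : ∫ p in P, Real.log (R₂ / R₁) * (p.1 * W p.2)
      = Real.log (R₂ / R₁) * ((∫ r in Ioo R₁ R₂, r) * (∫ θ in Ioo (-π) π, W θ)) := by
    rw [integral_const_mul]
    congr 1
    rw [hP, Measure.volume_eq_prod]
    exact setIntegral_prod_mul (fun r : ℝ => r) W (Ioo R₁ R₂) (Ioo (-π) π)
  -- step C: Fubini for the gradient term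
  have hstepC : ∫ p in P, p.1 * (u (p.1 • v p.2)) ^ 2 = ∫ θ in Ioo (-π) π, W θ := by
    rw [hP, Measure.volume_eq_prod, ← Measure.prod_restrict, ← integral_prod_swap,
      Measure.prod_restrict]
    have := setIntegral_prod (μ := volume) (ν := volume)
      (fun q : ℝ × ℝ => q.2 * (u (q.2 • v q.1)) ^ 2)
      (s := Ioo (-π) π) (t := Ioo R₁ R₂) ?_
    · rw [show (fun z : ℝ × ℝ => (fun q : ℝ × ℝ => q.1 * u (q.1 • v q.2) ^ 2) z.swap)
        = fun q : ℝ × ℝ => q.2 * (u (q.2 • v q.1)) ^ 2 from rfl]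
      rw [this]
      refine setIntegral_congr_fun measurableSet_Ioo fun θ _ => ?_
      rw [hWeq]
    · have hint := hintOn (-π) π R₁ R₂ (fun q : ℝ × ℝ => q.2 * (u (q.2 • v q.1)) ^ 2)
        (continuous_snd.mul (((hucont.comp
          (continuous_snd.smul (hvcont.comp continuous_fst))).pow 2)))
      rwa [IntegrableOn, Measure.volume_eq_prod] at hint
  -- put everything together
  have hIr : ∫ r in Ioo R₁ R₂, r = (R₂ ^ 2 - R₁ ^ 2) / 2 := by
    rw [← integral_Ioc_eq_integral_Ioo, ← intervalIntegral.integral_of_le hR₁₂.le,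
      integral_id]
  have hIW : 0 ≤ ∫ θ in Ioo (-π) π, W θ :=
    setIntegral_nonneg measurableSet_Ioo fun θ _ => hW0 θ
  have hlog : 0 ≤ Real.log (R₂ / R₁) :=
    Real.log_nonneg (by rw [le_div_iff₀ hR₁]; linarith)
  calc ∫ p in P, p.1 * (φ (p.1 • v p.2)) ^ 2
      ≤ Real.log (R₂ / R₁) * ((∫ r in Ioo R₁ R₂, r) * (∫ θ in Ioo (-π) π, W θ)) :=
        hstepB ▸ hstepA
    _ ≤ Real.log (R₂ / R₁) * ((R₂ ^ 2 / 2) * (∫ θ in Ioo (-π) π, W θ)) := by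
        refine mul_le_mul_of_nonneg_left (mul_le_mul_of_nonneg_right ?_ hIW) hlog
        rw [hIr]
        nlinarith [sq_nonneg R₁]
    _ = (R₂ ^ 2 * Real.log (R₂ / R₁) / 2) * ∫ θ in Ioo (-π) π, W θ := by ring
    _ = (R₂ ^ 2 * Real.log (R₂ / R₁) / 2) * ∫ p in P, p.1 * (u (p.1 • v p.2)) ^ 2 := by
        rw [hstepC]
end

section
/- Let V, d, j, R₁, R₂ be positive real numbers satisfying j² ≤ 8, d² ≥ 4V/π, R₂ ≥ √(V/π), and R₁ ≤ √(V/π) · exp(−(4π/j²)·(d²/V)). Then R₁ ≤ e⁻² · R₂ and 4/(R₂² · log(R₂/R₁)) ≤ j²/d². -/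
open Real

theorem stmt_9
    (V d j R₁ R₂ : ℝ)
    (hV : 0 < V) (hd : 0 < d) (hj : 0 < j) (hR₁ : 0 < R₁) (hR₂ : 0 < R₂)
    (hj2 : j ^ 2 ≤ 8)
    (hd2 : d ^ 2 ≥ 4 * V / π)
    (hR₂' : R₂ ≥ Real.sqrt (V / π))
    (hR₁' : R₁ ≤ Real.sqrt (V / π) * Real.exp (-(4 * π / j ^ 2) * (d ^ 2 / V))) :
    R₁ ≤ Real.exp (-2) * R₂ ∧ 4 / (R₂ ^ 2 * Real.log (R₂ / R₁)) ≤ j ^ 2 / d ^ 2 := by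
  have hπ : (0:ℝ) < π := Real.pi_pos
  have hsV : 0 < V / π := div_pos hV hπ
  set s := Real.sqrt (V / π) with hs
  have hs0 : 0 < s := Real.sqrt_pos.mpr hsV
  have hs2 : s ^ 2 = V / π := Real.sq_sqrt hsV.le
  set E := 4 * π / j ^ 2 * (d ^ 2 / V) with hEdef
  have hj2' : 0 < j ^ 2 := by positivity
  have hVd : 4 * V ≤ d ^ 2 * π := (div_le_iff₀ hπ).mp hd2
  have hE2 : 2 ≤ E := by
    rw [hEdef, div_mul_div_comm, le_div_iff₀ (by positivity)]
    nlinarith [hV.le, hj2, hVd]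
  have hexp : Real.exp (-E) ≤ Real.exp (-2) := Real.exp_le_exp.mpr (by linarith)
  have h1 : R₁ ≤ s * Real.exp (-2) := by
    calc R₁ ≤ s * Real.exp (-E) := by rw [hEdef] at *; simpa using hR₁'
    _ ≤ s * Real.exp (-2) := by exact mul_le_mul_of_nonneg_left hexp hs0.le
  constructor
  · calc R₁ ≤ s * Real.exp (-2) := h1
      _ ≤ R₂ * Real.exp (-2) := mul_le_mul_of_nonneg_right hR₂' (Real.exp_pos _).le
      _ = Real.exp (-2) * R₂ := mul_comm _ _
  · have hlogR₁ : Real.log R₁ ≤ Real.log s + (-E) := by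
      have : Real.log R₁ ≤ Real.log (s * Real.exp (-E)) := by
        apply Real.log_le_log hR₁
        rw [hEdef] at *; simpa using hR₁'
      rwa [Real.log_mul hs0.ne' (Real.exp_pos _).ne', Real.log_exp] at this
    have hlogs : Real.log s ≤ Real.log R₂ := Real.log_le_log hs0 hR₂'
    have hlog : E ≤ Real.log (R₂ / R₁) := by
      rw [Real.log_div hR₂.ne' hR₁.ne']; linarith
    have hEpos : 0 < E := by linarith
    have hbig : 4 * d ^ 2 / j ^ 2 ≤ R₂ ^ 2 * Real.log (R₂ / R₁) := by
      have hR22 : V / π ≤ R₂ ^ 2 := by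
        rw [← hs2]; exact pow_le_pow_left₀ hs0.le hR₂' 2
      calc 4 * d ^ 2 / j ^ 2 = (V / π) * E := by
            rw [hEdef]; field_simp
        _ ≤ R₂ ^ 2 * Real.log (R₂ / R₁) :=
            mul_le_mul hR22 hlog hEpos.le (by positivity)
    have hsmall : 0 < 4 * d ^ 2 / j ^ 2 := by positivity
    calc 4 / (R₂ ^ 2 * Real.log (R₂ / R₁)) ≤ 4 / (4 * d ^ 2 / j ^ 2) :=
          div_le_div_of_nonneg_left (by norm_num) hsmall hbig
      _ = j ^ 2 / d ^ 2 := by field_simp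
end
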